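/- arXiv:2503.10295 — 6 statements merged into one kernel-verified Lean document; each statement's English description precedes it below -/
import Mathlib

section
/- Let D be a strong quasi-transitive digraph. Then there exists a strong semicomplete digraph H on h vertices and quasi-transitive digraphs S_1,…,S_h such that D = H[S_1,…,S_h], where each S_i is either a single vertex or a non-strong digraph. -/
/-- A simple digraph: an irreflexive adjacency relation (no loops, no parallel arcs). -/
structure Digr (V : Type) where
  Adj : V → V → Prop
  irrefl : ∀ v, ¬ Adj v v

namespace Digr

variable {V : Type}

/-- `p` is a directed path (as a list of distinct vertices) from `x` to `y`. -/
def IsPathFrom (G : Digr V) (p : List V) (x y : V) : Prop :=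
  p.head? = some x ∧ p.getLast? = some y ∧ p.Chain' G.Adj ∧ p.Nodup

/-- A path from `x` to `y` all of whose vertices lie in `A`. -/
def IsPathOn (G : Digr V) (A : Set V) (p : List V) (x y : V) : Prop :=
  G.IsPathFrom p x y ∧ ∀ v ∈ p, v ∈ A

/-- The digraph restricted to `A` is strongly connected. -/
def StronglyConnectedOn (G : Digr V) (A : Set V) : Prop :=
  ∀ x ∈ A, ∀ y ∈ A, x ≠ y → ∃ p, G.IsPathOn A p x y

/-- A digraph is strong if every ordered pair of distinct vertices is joined by a path. -/
def IsStrong (G : Digr V) : Prop :=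
  ∀ x y : V, x ≠ y → ∃ p, G.IsPathFrom p x y

/-- `G` is `k`-strong: at least `k+1` vertices, and deleting any at most `k-1`
vertices leaves a strongly connected digraph. -/
def KStrong [Fintype V] (G : Digr V) (k : ℕ) : Prop :=
  k + 1 ≤ Fintype.card V ∧
  ∀ S : Finset V, S.card ≤ k - 1 → G.StronglyConnectedOn ((↑S : Set V)ᶜ)

/-- `G` is `k`-linked. -/
def KLinked [Fintype V] (G : Digr V) (k : ℕ) : Prop :=
  2 * k ≤ Fintype.card V ∧
  ∀ x y : Fin k → V, Function.Injective (Sum.elim x y) →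
    ∃ P : Fin k → List V,
      (∀ i, G.IsPathFrom (P i) (x i) (y i)) ∧
      (∀ i j, i ≠ j → ∀ v, v ∈ P i → v ∉ P j)

/-- Semicomplete: at least one arc between any two distinct vertices. -/
def Semicomplete (G : Digr V) : Prop :=
  ∀ x y : V, x ≠ y → G.Adj x y ∨ G.Adj y x

/-- Out-degree of a vertex. -/
noncomputable def outDeg [Fintype V] (G : Digr V) (v : V) : ℕ :=
  Set.ncard {w | G.Adj v w}

/-- In-degree of a vertex. -/
noncomputable def inDeg [Fintype V] (G : Digr V) (v : V) : ℕ :=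
  Set.ncard {w | G.Adj w v}

/-- `G` together with the surjection `φ : V → ι` realizes a composition `H[S₁,…,S_h]`:
between distinct parts, the arcs of `G` are exactly those prescribed by `H`. -/
def IsCompositionOver {ι : Type} (G : Digr V) (H : Digr ι) (φ : V → ι) : Prop :=
  Function.Surjective φ ∧ ∀ u v : V, φ u ≠ φ v → (G.Adj u v ↔ H.Adj (φ u) (φ v))

end Digr

namespace Digr

/-- Quasi-transitive digraph: whenever xy and yz are arcs, x and z are adjacent. -/
def QuasiTransitive {V : Type} (G : Digr V) : Prop :=
  ∀ x y z : V, G.Adj x y → G.Adj y z → x ≠ z → (G.Adj x z ∨ G.Adj z x)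

/-- The subdigraph induced by a set of vertices. -/
def induce {V : Type} (G : Digr V) (A : Set V) : Digr A :=
  ⟨fun a b => G.Adj a b, fun a h => G.irrefl a h⟩

end Digr



section Aux
variable {α : Type*}

lemma qtdGetLastDrop : ∀ (l : List α) (j : ℕ), j < l.length → (l.drop j).getLast? = l.getLast? := by
  intro l
  induction l with
  | nil => intro j h; simp at h
  | cons a t ih =>
    intro j h
    cases j with
    | zero => rfl
    | succ j =>
      have ht : j < t.length := by simpa using h
      have : t ≠ [] := by intro he; rw [he] at ht; simp at ht
      rw [List.drop_succ_cons, ih j ht]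
      cases t with
      | nil => simp at this
      | cons b r => simp [List.getLast?_cons_cons]

lemma qtdHeadDrop (d : α) : ∀ (l : List α) (j : ℕ), j < l.length → (l.drop j).head? = some (l.getD j d) := by
  intro l
  induction l with
  | nil => intro j h; simp at h
  | cons a t ih =>
    intro j h
    cases j with
    | zero => rfl
    | succ j =>
      have ht : j < t.length := by simpa using h
      rw [List.drop_succ_cons, ih j ht]; rfl

lemma qtdGetLastTake (d : α) : ∀ (l : List α) (i : ℕ), i < l.length → (l.take (i+1)).getLast? = some (l.getD i d) := by
  intro l
  induction l with
  | nil => intro i h; simp at h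
  | cons a t ih =>
    intro i h
    cases i with
    | zero => rfl
    | succ i =>
      have ht : i < t.length := by simpa using h
      have hne : t.take (i+1) ≠ [] := by
        have hl : (t.take (i+1)).length = min (i+1) t.length := List.length_take
        intro he; rw [he] at hl; simp at hl; omega
      rw [List.take_succ_cons]
      rw [show ((a :: t.take (i+1)).getLast? ) = (t.take (i+1)).getLast? from ?_ , ih i ht]
      · rfl
      · cases hh : t.take (i+1) with
        | nil => exact absurd hh hne
        | cons b r => simp [List.getLast?_cons_cons]

lemma qtdHeadTake : ∀ (l : List α) (i : ℕ), (l.take (i+1)).head? = l.head? := by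
  intro l i; cases l <;> simp [List.take_succ_cons]

variable {R : α → α → Prop}

lemma qtdGetLastConsNe (a : α) {p : List α} (h : p ≠ []) : (a :: p).getLast? = p.getLast? := by
  cases p with
  | nil => exact absurd rfl h
  | cons b r => exact List.getLast?_cons_cons

/-- extract a nodup path from reflexive-transitive reachability -/
lemma qtdExtract {u w : α} (h : Relation.ReflTransGen R u w) :
    ∃ p : List α, p.head? = some u ∧ p.getLast? = some w ∧ p.Chain' R ∧ p.Nodup := by
  classical
  induction h using Relation.ReflTransGen.head_induction_on with
  | refl => exact ⟨[w], rfl, rfl, List.isChain_singleton w, List.nodup_singleton w⟩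
  | head hac hcb ih =>
    rename_i a c
    obtain ⟨p, hh, hl, hc, hn⟩ := ih
    by_cases hmem : a ∈ p
    · obtain ⟨⟨i, hi⟩, rfl⟩ := List.mem_iff_get.1 hmem
      refine ⟨p.drop i, ?_, ?_, hc.drop i, hn.sublist (List.drop_sublist i p)⟩
      · rw [qtdHeadDrop (p.get ⟨i, hi⟩) p i hi]
        congr 1
        exact List.getD_eq_get p _ ⟨i, hi⟩
      · rw [qtdGetLastDrop p i hi]; exact hl
    · have hpne : p ≠ [] := by intro he; rw [he] at hh; simp at hh
      refine ⟨a :: p, rfl, ?_, ?_, ?_⟩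
      · rw [qtdGetLastConsNe a hpne]; exact hl
      · refine List.isChain_cons.2 ?_
        exact ⟨fun y hy => by rw [hh] at hy; cases hy; exact hac, hc⟩
      · exact List.nodup_cons.2 ⟨hmem, hn⟩

/-- a chain'-walk gives reachability from head to last -/
lemma qtdChainRTG : ∀ (p : List α) (u w : α), p.head? = some u → p.getLast? = some w →
    p.Chain' R → Relation.ReflTransGen R u w := by
  intro p
  induction p with
  | nil => intro u w h; simp at h
  | cons a t ih =>
    intro u w hh hl hc
    have hua : a = u := by simpa using hh
    subst hua
    cases t with
    | nil => simp at hl; subst hl; exact Relation.ReflTransGen.refl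
    | cons b r =>
      have hstep : R a b := (List.isChain_cons_cons.1 hc).1
      have hrest : Relation.ReflTransGen R b w :=
        ih b w rfl (by rw [qtdGetLastConsNe a (by simp : (b :: r) ≠ [])] at hl; exact hl) (List.isChain_cons_cons.1 hc).2
      exact Relation.ReflTransGen.head hstep hrest

lemma qtdRtgRestrict {A : Set α} (hS : ∀ a b, a ∈ A → R a b → b ∈ A)
    {u w : α} (h : Relation.ReflTransGen R u w) (hu : u ∈ A) :
    ∃ hw : w ∈ A, Relation.ReflTransGen (fun a b : A => R a b) ⟨u, hu⟩ ⟨w, hw⟩ := by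
  induction h with
  | refl => exact ⟨hu, Relation.ReflTransGen.refl⟩
  | tail hab hbc ih =>
    obtain ⟨hw, hr⟩ := ih
    exact ⟨hS _ _ hw hbc, hr.tail hbc⟩

end Aux


namespace Digr
variable {V : Type}

/-- non-adjacency relation -/
def NAdj (G : Digr V) (u v : V) : Prop := u ≠ v ∧ ¬ G.Adj u v ∧ ¬ G.Adj v u

lemma NAdj.symm2 {G : Digr V} {u v : V} (h : G.NAdj u v) : G.NAdj v u :=
  ⟨h.1.symm, h.2.2, h.2.1⟩

/-- connectivity in the complement -/
def Con (G : Digr V) : V → V → Prop := Relation.ReflTransGen G.NAdj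

lemma con_symm {G : Digr V} : Symmetric G.Con :=
  by
    haveI : Std.Symm G.NAdj := ⟨fun _ _ h => h.symm2⟩
    exact fun a b h => (Relation.ReflTransGen.symmetric).symm a b h

lemma twin_in {G : Digr V} (hqt : G.QuasiTransitive) {u v z : V} (hzu : G.Adj z u)
    (hn : G.NAdj u v) (hadj : G.Adj z v ∨ G.Adj v z) : G.Adj z v := by
  rcases hadj with h | h
  · exact h
  · rcases hqt v z u h hzu hn.1.symm with h' | h'
    · exact absurd h' hn.2.2
    · exact absurd h' hn.2.1

lemma twin_out {G : Digr V} (hqt : G.QuasiTransitive) {u v z : V} (hzu : G.Adj u z)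
    (hn : G.NAdj u v) (hadj : G.Adj v z ∨ G.Adj z v) : G.Adj v z := by
  rcases hadj with h | h
  · exact h
  · rcases hqt u z v hzu h hn.1 with h' | h'
    · exact absurd h' hn.2.1
    · exact absurd h' hn.2.2

/-- vertices outside the complement-component of `u` see all of it uniformly -/
lemma class_transfer {G : Digr V} (hqt : G.QuasiTransitive) {u u' z : V}
    (h : G.Con u u') (hz : ¬ G.Con u z) :
    (G.Adj z u ↔ G.Adj z u') ∧ (G.Adj u z ↔ G.Adj u' z) := by
  induction h with
  | refl => exact ⟨Iff.rfl, Iff.rfl⟩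
  | tail hab hbc ih =>
    rename_i b c
    have hzb : G.Adj z b ∨ G.Adj b z := by
      by_contra hcon
      push_neg at hcon
      rcases eq_or_ne z b with rfl | hne
      · exact hz hab
      · exact hz (hab.tail ⟨hne.symm, hcon.2, hcon.1⟩)
    have hzc : G.Adj z c ∨ G.Adj c z := by
      by_contra hcon
      push_neg at hcon
      rcases eq_or_ne z c with rfl | hne
      · exact hz (hab.tail hbc)
      · exact hz ((hab.tail hbc).tail ⟨hne.symm, hcon.2, hcon.1⟩)
    constructor
    · constructor
      · intro h1
        exact twin_in hqt (ih.1.mp h1) hbc hzc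
      · intro h1
        exact ih.1.mpr (twin_in hqt h1 hbc.symm2 hzb)
    · constructor
      · intro h1
        exact twin_out hqt (ih.2.mp h1) hbc (hzc.symm)
      · intro h1
        exact ih.2.mpr (twin_out hqt h1 hbc.symm2 (hzb.symm))

end Digr

namespace Digr
variable {V : Type}

lemma dist3 {G : Digr V} (hqt : G.QuasiTransitive) (hstr : G.IsStrong) {u v : V}
    (hn : G.NAdj u v) :
    ∃ a b, G.Adj u a ∧ G.Adj a b ∧ G.Adj b v ∧ G.Adj b u ∧ G.Adj v a := by
  classical
  have hex : ∃ n, ∃ p, G.IsPathFrom p u v ∧ p.length = n := by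
    obtain ⟨p, hp⟩ := hstr u v hn.1
    exact ⟨p.length, p, hp, rfl⟩
  obtain ⟨p, hp, hplen⟩ := Nat.find_spec hex
  have hmin : ∀ q, G.IsPathFrom q u v → p.length ≤ q.length := by
    intro q hq
    rw [hplen]
    exact Nat.find_min' hex ⟨q, hq, rfl⟩
  clear hplen
  obtain ⟨hph, hpl, hpc, hpn⟩ := hp
  set x : ℕ → V := fun i => p.getD i u with hxdef
  have hpne : p ≠ [] := by intro he; rw [he] at hph; simp at hph
  have hxget : ∀ i (h : i < p.length), x i = p.get ⟨i, h⟩ := by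
    intro i h; exact List.getD_eq_get p u ⟨i, h⟩
  have hx0 : x 0 = u := by
    cases p with
    | nil => exact absurd rfl hpne
    | cons a t => simpa [hxdef] using (by simpa using hph : a = u)
  have hxm : x (p.length - 1) = v := by
    have h1 : p.getLast? = some (p.getLast hpne) := List.getLast?_eq_getLast_of_ne_nil hpne
    have h2 : p.getLast hpne = v := by
      rw [h1] at hpl; exact Option.some_injective _ hpl
    have h3 : p.length - 1 < p.length := by
      cases p with
      | nil => exact absurd rfl hpne
      | cons a t => simp
    rw [hxget _ h3]
    rw [← h2, List.getLast_eq_getElem]; rfl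
  have harc : ∀ i, i + 1 < p.length → G.Adj (x i) (x (i + 1)) := by
    intro i h
    have h1 : i < p.length - 1 := by omega
    have := List.isChain_iff_getElem.1 hpc i (by omega)
    rw [hxget i (by omega), hxget (i+1) (by omega)]
    convert this using 2 <;> rfl
  have hinj : ∀ i j, i < p.length → j < p.length → x i = x j → i = j := by
    intro i j hi hj hxe
    rw [hxget i hi, hxget j hj] at hxe
    have := (hpn.get_inj_iff).1 hxe
    exact congrArg Fin.val this
  have hnos : ∀ i j, i + 2 ≤ j → j < p.length → ¬ G.Adj (x i) (x j) := by
    intro i j hij hj hAdj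
    have hi : i < p.length := by omega
    set q : List V := p.take (i+1) ++ p.drop j with hqdef
    have htne : p.take (i+1) ≠ [] := by
      have hl : (p.take (i+1)).length = min (i+1) p.length := List.length_take
      intro he; rw [he] at hl; simp at hl; omega
    have hdne : p.drop j ≠ [] := by
      have hl : (p.drop j).length = p.length - j := List.length_drop
      intro he; rw [he] at hl; simp at hl; omega
    have hq : G.IsPathFrom q u v := by
      refine ⟨?_, ?_, ?_, ?_⟩
      · rw [hqdef, List.head?_append_of_ne_nil _ htne, qtdHeadTake]; exact hph
      · rw [hqdef, List.getLast?_append_of_ne_nil _ hdne, qtdGetLastDrop p j hj]; exact hpl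
      · rw [hqdef]
        refine List.isChain_append.2 ⟨hpc.take _, hpc.drop _, ?_⟩
        intro a ha b hb
        rw [qtdGetLastTake u p i hi] at ha
        rw [qtdHeadDrop u p j hj] at hb
        cases ha; cases hb
        exact hAdj
      · have hsub : q.Sublist p := by
          conv_rhs => rw [← List.take_append_drop (i+1) p]
          refine List.Sublist.append_left ?_ _
          have : p.drop j = List.drop (j - (i+1)) (p.drop (i+1)) := by
            rw [List.drop_drop]
            congr 1
            omega
          rw [this]
          exact List.drop_sublist _ _
        exact hpn.sublist hsub
    have hql : q.length = (i+1) + (p.length - j) := by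
      rw [hqdef, List.length_append, List.length_take, List.length_drop]
      omega
    have := hmin q hq
    omega
  have hlen2 : 2 ≤ p.length := by
    rcases p with _ | ⟨a, _ | ⟨b, t⟩⟩
    · exact absurd rfl hpne
    · exfalso; apply hn.1
      have : a = u := by simpa using hph
      have h2 : a = v := by simpa using hpl
      rw [← this, h2]
    · simp
  have hlen4 : 4 ≤ p.length := by
    rcases Nat.lt_or_ge p.length 3 with h3 | h3
    · exfalso
      have harc0 := harc 0 (by omega)
      have : p.length - 1 = 1 := by omega
      rw [this] at hxm
      rw [hx0, hxm] at harc0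
      exact hn.2.1 harc0
    rcases Nat.lt_or_ge p.length 4 with h4 | h4
    · exfalso
      have harc0 := harc 0 (by omega)
      have harc1 := harc 1 (by omega)
      have hne : x 0 ≠ x 2 := fun he => by have := hinj 0 2 (by omega) (by omega) he; omega
      have : p.length - 1 = 2 := by omega
      rw [this] at hxm
      rcases hqt (x 0) (x 1) (x 2) harc0 harc1 hne with h' | h'
      · rw [hx0, hxm] at h'; exact hn.2.1 h'
      · rw [hx0, hxm] at h'; exact hn.2.2 h'
    exact h4
  have hback : ∀ i, i + 2 < p.length → G.Adj (x (i+2)) (x i) := by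
    intro i h
    have hne : x i ≠ x (i+2) := fun he => by
      have := hinj i (i+2) (by omega) (by omega) he; omega
    rcases hqt (x i) (x (i+1)) (x (i+2)) (harc i (by omega)) (harc (i+1) (by omega)) hne with h' | h'
    · exact absurd h' (hnos i (i+2) (by omega) (by omega))
    · exact h'
  set m := p.length - 1 with hmdef
  have hm : m + 1 = p.length := by omega
  -- show m = 3
  have hm3 : m = 3 := by
    by_contra hne3
    have hm4 : 4 ≤ m := by omega
    have desc : ∀ j, 1 ≤ j → j + 2 ≤ m → G.Adj (x m) (x j) → False := by
      intro j
      induction j using Nat.strong_induction_on with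
      | _ j ih =>
        intro h1 h2 hadj
        rcases Nat.lt_or_ge j 3 with hj3 | hj3
        · -- j = 1 or 2 : finish
          have hxm2 : G.Adj (x m) (x 2) := by
            rcases Nat.lt_or_ge j 2 with hj2 | hj2
            · -- j = 1
              have hj1 : j = 1 := by omega
              subst hj1
              have harc1 := harc 1 (by omega)
              have hne12 : x m ≠ x 2 := fun he => by
                have := hinj m 2 (by omega) (by omega) he; omega
              rcases hqt (x m) (x 1) (x 2) hadj harc1 hne12 with h' | h'
              · exact h'
              · exact absurd h' (hnos 2 m (by omega) (by omega))
            · have hj2' : j = 2 := by omega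
              subst hj2'; exact hadj
          have hb20 := hback 0 (by omega)
          have hne0 : x m ≠ x 0 := fun he => by
            have := hinj m 0 (by omega) (by omega) he; omega
          rcases hqt (x m) (x 2) (x 0) hxm2 hb20 hne0 with h' | h'
          · rw [hx0] at h'; rw [hxm] at h'; exact hn.2.2 h'
          · rw [hx0] at h'; rw [hxm] at h'; exact hn.2.1 h'
        · -- j ≥ 3 : descend
          have hbj := hback (j-2) (by omega)
          rw [show j - 2 + 2 = j from by omega] at hbj
          have hnej : x m ≠ x (j-2) := fun he => by
            have := hinj m (j-2) (by omega) (by omega) he; omega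
          rcases hqt (x m) (x j) (x (j-2)) hadj hbj hnej with h' | h'
          · exact ih (j-2) (by omega) (by omega) (by omega) h'
          · exact absurd h' (hnos (j-2) m (by omega) (by omega))
    have hstart := hback (m-2) (by omega)
    rw [show m - 2 + 2 = m from by omega] at hstart
    exact desc (m-2) (by omega) (by omega) hstart
  -- now m = 3 : extract the structure
  refine ⟨x 1, x 2, ?_, ?_, ?_, ?_, ?_⟩
  · rw [← hx0]; exact harc 0 (by omega)
  · exact harc 1 (by omega)
  · rw [← hxm, hm3]; exact harc 2 (by omega)
  · rw [← hx0]; exact hback 0 (by omega)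
  · rw [← hxm, hm3]; exact hback 1 (by omega)

end Digr

section Aux3
variable {α : Type*}

lemma qtdChainStrengthen {R : α → α → Prop} {P : α → Prop} :
    ∀ {p : List α}, p.Chain' R → (∀ v ∈ p, P v) → p.Chain' (fun a b => R a b ∧ P a ∧ P b) := by
  intro p
  induction p with
  | nil => intro _ _; exact List.isChain_nil
  | cons a t ih =>
    intro hc hm
    cases t with
    | nil => exact List.isChain_singleton a
    | cons b r =>
      have h1 := List.isChain_cons_cons.1 hc
      refine List.isChain_cons_cons.2 ⟨⟨h1.1, hm a (by simp), hm b (by simp)⟩, ?_⟩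
      exact ih h1.2 (fun v hv => hm v (List.mem_cons_of_mem a hv))

end Aux3

namespace Digr
variable {V : Type}

/-- detour around `y`: if `a → y → b` then `a` reaches `b` avoiding `y`. -/
lemma detour {G : Digr V} (hqt : G.QuasiTransitive) (hstr : G.IsStrong) {y x : V}
    (hyx : G.NAdj y x) {a b : V} (hay : G.Adj a y) (hyb : G.Adj y b) :
    Relation.ReflTransGen (fun s t => G.Adj s t ∧ s ≠ y ∧ t ≠ y) a b := by
  have hane : a ≠ y := fun he => G.irrefl y (he ▸ hay)
  have hbne : b ≠ y := fun he => G.irrefl y (he ▸ hyb)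
  have hxy : x ≠ y := hyx.1.symm
  have h1 : Relation.ReflTransGen (fun s t => G.Adj s t ∧ s ≠ y ∧ t ≠ y) a x := by
    rcases eq_or_ne a x with rfl | hax
    · exact .refl
    by_cases hadj : G.Adj a x ∨ G.Adj x a
    · exact .single ⟨twin_in hqt hay hyx hadj, hane, hxy⟩
    · push_neg at hadj
      obtain ⟨s, t, k1, k2, k3, k4, k5⟩ := dist3 hqt hstr ⟨hax, hadj.1, hadj.2⟩
      have hsne : s ≠ y := fun he => hyx.2.2 (he ▸ k5)
      have htne : t ≠ y := fun he => hyx.2.1 (he ▸ k3)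
      exact .head ⟨k1, hane, hsne⟩ (.head ⟨k2, hsne, htne⟩ (.single ⟨k3, htne, hxy⟩))
  have h2 : Relation.ReflTransGen (fun s t => G.Adj s t ∧ s ≠ y ∧ t ≠ y) x b := by
    rcases eq_or_ne x b with rfl | hxb
    · exact .refl
    by_cases hadj : G.Adj x b ∨ G.Adj b x
    · exact .single ⟨twin_out hqt hyb hyx hadj, hxy, hbne⟩
    · push_neg at hadj
      obtain ⟨s, t, k1, k2, k3, k4, k5⟩ := dist3 hqt hstr ⟨hxb, hadj.1, hadj.2⟩
      have hsne : s ≠ y := fun he => hyx.2.2 (he ▸ k1)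
      have htne : t ≠ y := fun he => hyx.2.1 (he ▸ k4)
      exact .head ⟨k1, hxy, hsne⟩ (.head ⟨k2, hsne, htne⟩ (.single ⟨k3, htne, hbne⟩))
  exact h1.trans h2

/-- a walk in `G` between vertices different from `y` can be rerouted to avoid `y`. -/
lemma skipWalk {G : Digr V} (hqt : G.QuasiTransitive) (hstr : G.IsStrong) {y x : V}
    (hyx : G.NAdj y x) :
    ∀ (n : ℕ) (p : List V) (u w : V), p.length ≤ n → p.Chain' G.Adj → p.head? = some u →
    p.getLast? = some w → u ≠ y → w ≠ y →
    Relation.ReflTransGen (fun s t => G.Adj s t ∧ s ≠ y ∧ t ≠ y) u w := by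
  intro n
  induction n with
  | zero =>
    intro p u w hlen _ hh _ _ _
    have : p = [] := List.length_eq_zero_iff.1 (by omega)
    rw [this] at hh; simp at hh
  | succ n ih =>
    intro p u w hlen hc hh hl hu hw
    cases p with
    | nil => simp at hh
    | cons a t =>
      have hau : a = u := by simpa using hh
      subst hau
      cases t with
      | nil =>
        have : a = w := by simpa using hl
        subst this; exact .refl
      | cons b r =>
        have hab : G.Adj a b := (List.isChain_cons_cons.1 hc).1
        have hlr : (b :: r).getLast? = some w := by
          rw [qtdGetLastConsNe a (by simp : (b :: r) ≠ [])] at hl; exact hl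
        have hcr : (b :: r).Chain' G.Adj := (List.isChain_cons_cons.1 hc).2
        by_cases hby : b = y
        · cases r with
          | nil =>
            exfalso; apply hw; rw [← hby]; symm; simpa using hlr
          | cons c r' =>
            have hyc' : G.Adj y c := hby ▸ (List.isChain_cons_cons.1 hcr).1
            have hay : G.Adj a y := hby ▸ hab
            have hcne : c ≠ y := fun he => G.irrefl y (he ▸ hyc')
            have hseg := detour hqt hstr hyx hay hyc'
            have hrest := ih (c :: r') c w (by simp at hlen ⊢; omega) (List.isChain_cons_cons.1 hcr).2 rfl
              (by rw [qtdGetLastConsNe b (by simp : (c :: r') ≠ [])] at hlr; exact hlr) hcne hw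
            exact hseg.trans hrest
        · have hrest := ih (b :: r) b w (by simp at hlen ⊢; omega) hcr rfl hlr hby hw
          exact Relation.ReflTransGen.head ⟨hab, hu, hby⟩ hrest

end Digr

namespace Digr
variable {V : Type}

/-- a strong quasi-transitive digraph on more than one vertex has disconnected complement -/
lemma claimB : ∀ (n : ℕ) {V : Type} [Fintype V] (G : Digr V), G.QuasiTransitive → G.IsStrong →
    Fintype.card V ≤ n → 1 < Fintype.card V → (∀ u w : V, G.Con u w) → False := by
  intro n
  induction n with
  | zero =>
    intro V _ G _ _ hc h1 _
    omega
  | succ n ih =>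
    intro V _ G hqt hstr hcn h1 hconn
    classical
    have hnt : Nontrivial V := Fintype.one_lt_card_iff_nontrivial.1 h1
    by_cases h2 : Fintype.card V = 2
    · -- base : only two vertices, necessarily nonadjacent and joined by a path
      obtain ⟨u0, z0, hne⟩ := exists_pair_ne V
      obtain ⟨a0, b0, hnadj⟩ : ∃ a b, G.NAdj a b := by
        rcases Relation.ReflTransGen.cases_head (hconn u0 z0) with he | ⟨c, hc, -⟩
        · exact absurd he hne
        · exact ⟨u0, c, hc⟩
      obtain ⟨p, hh, hl, hc, hn⟩ := hstr a0 b0 hnadj.1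
      have hlen2 : p.length ≤ 2 := h2 ▸ hn.length_le_card
      have hpne : p ≠ [] := by intro he; rw [he] at hh; simp at hh
      rcases p with _ | ⟨a, _ | ⟨b, _ | ⟨c, t⟩⟩⟩
      · exact absurd rfl hpne
      · apply hnadj.1
        have h1' : a = a0 := by simpa using hh
        have h2' : a = b0 := by simpa using hl
        rw [← h1', h2']
      · apply hnadj.2.1
        have h1' : a = a0 := by simpa using hh
        have h2' : b = b0 := by simpa using hl
        have := (List.isChain_cons_cons.1 hc).1
        rw [h1', h2'] at this
        exact this
      · simp at hlen2
    · have h3 : 3 ≤ Fintype.card V := by omega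
      -- complement digraph and distances from a fixed vertex u0
      set CoG : Digr V := ⟨G.NAdj, fun v hv => hv.1 rfl⟩ with hCoGdef
      obtain ⟨u0⟩ : Nonempty V := inferInstance
      have hex : ∀ z : V, ∃ k, ∃ p, CoG.IsPathFrom p u0 z ∧ p.length = k := by
        intro z
        obtain ⟨p, k1, k2, k3, k4⟩ := qtdExtract (hconn u0 z)
        exact ⟨p.length, p, ⟨k1, k2, k3, k4⟩, rfl⟩
      set d : V → ℕ := fun z => Nat.find (hex z) with hddef
      obtain ⟨y, -, hymax⟩ := Finset.exists_max_image Finset.univ d ⟨u0, Finset.mem_univ u0⟩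
      have hdspec : ∀ z, ∃ p, CoG.IsPathFrom p u0 z ∧ p.length = d z := fun z => Nat.find_spec (hex z)
      have hdmin : ∀ z (p : List V), CoG.IsPathFrom p u0 z → d z ≤ p.length := by
        intro z p hp
        exact Nat.find_min' (hex z) ⟨p, hp, rfl⟩
      have hdu0 : d u0 ≤ 1 :=
        hdmin u0 [u0] ⟨rfl, rfl, List.isChain_singleton u0, List.nodup_singleton u0⟩
      have hdlow : ∀ z, z ≠ u0 → 2 ≤ d z := by
        intro z hz
        obtain ⟨p, hp, hplen⟩ := hdspec z
        rcases p with _ | ⟨a, _ | ⟨b, t⟩⟩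
        · simp [IsPathFrom] at hp
        · exfalso
          apply hz
          have h1' : a = u0 := by simpa using hp.1
          have h2' : a = z := by simpa using hp.2.1
          rw [← h2', h1']
        · rw [← hplen]; simp
      have hyne : y ≠ u0 := by
        obtain ⟨z1, hz1⟩ := exists_ne u0
        intro he
        have k1 := hymax z1 (Finset.mem_univ z1)
        rw [he] at k1
        have k2 := hdlow z1 hz1
        omega
      -- minimal complement paths from u0 avoid y
      have havoid : ∀ z, z ≠ y → ∃ p, CoG.IsPathFrom p u0 z ∧ y ∉ p := by
        intro z hzy
        obtain ⟨p, hp, hplen⟩ := hdspec z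
        refine ⟨p, hp, ?_⟩
        intro hymem
        obtain ⟨⟨i, hi⟩, hgy⟩ := List.mem_iff_get.1 hymem
        have hq : CoG.IsPathFrom (p.take (i+1)) u0 y := by
          refine ⟨?_, ?_, hp.2.2.1.take _, hp.2.2.2.sublist (List.take_sublist _ _)⟩
          · rw [qtdHeadTake]; exact hp.1
          · rw [qtdGetLastTake u0 p i hi]
            rw [List.getD_eq_get p u0 ⟨i, hi⟩]
            exact congrArg some hgy
        have hdy : d y ≤ i + 1 := by
          have := hdmin y _ hq
          rwa [List.length_take, min_eq_left (by omega)] at this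
        rcases Nat.lt_or_ge (i+1) p.length with hlt | hge
        · have k1 : d z ≤ d y := hymax z (Finset.mem_univ z)
          omega
        · apply hzy
          have hi1 : i = p.length - 1 := by omega
          have hpne : p ≠ [] := by intro he; rw [he] at hi; simp at hi
          have k2 : p.getLast? = some (p.getLast hpne) := List.getLast?_eq_getLast_of_ne_nil hpne
          rw [hp.2.1] at k2
          have k3 : p.getLast hpne = p.get ⟨p.length - 1, by omega⟩ := List.getLast_eq_getElem hpne
          have k4 : z = p.get ⟨p.length - 1, by omega⟩ := by
            rw [← k3]; exact Option.some_injective _ k2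
          rw [k4, ← hgy]
          congr 1
          exact Fin.ext hi1.symm
      -- a complement-neighbour of y
      obtain ⟨x, hyx⟩ : ∃ x, G.NAdj y x := by
        obtain ⟨z1, hz1⟩ := exists_ne y
        rcases Relation.ReflTransGen.cases_head (hconn y z1) with he | ⟨c, hc, -⟩
        · exact absurd he (Ne.symm hz1)
        · exact ⟨c, hc⟩
      -- the reduced digraph on V \ {y}
      set A : Set V := {z | z ≠ y} with hAdef
      set G' : Digr A := G.induce A with hG'def
      have hu0A : u0 ∈ A := Ne.symm hyne
      have hstr' : G'.IsStrong := by
        rintro ⟨s, hs⟩ ⟨t, ht⟩ hnest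
        have hst : s ≠ t := fun he => hnest (Subtype.ext he)
        obtain ⟨p, hh, hl, hc, hn⟩ := hstr s t hst
        have hreach := skipWalk hqt hstr hyx p.length p s t le_rfl hc hh hl hs ht
        obtain ⟨hw, hr⟩ := qtdRtgRestrict (A := A) (fun a b _ hab => hab.2.2) hreach hs
        have hr' : Relation.ReflTransGen G'.Adj ⟨s, hs⟩ ⟨t, hw⟩ :=
          by refine Relation.ReflTransGen.mono ?_ _ _ hr; intro a b h; exact h.1
        obtain ⟨q, k1, k2, k3, k4⟩ := qtdExtract hr'
        exact ⟨q, k1, k2, k3, k4⟩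
      have hqt' : G'.QuasiTransitive := fun a b c h1' h2' hne' =>
        hqt a b c h1' h2' (fun he => hne' (Subtype.ext he))
      have hconn' : ∀ s t : A, G'.Con s t := by
        have key : ∀ s : A, G'.Con ⟨u0, hu0A⟩ s := by
          rintro ⟨s, hs⟩
          obtain ⟨p, hp, hy1⟩ := havoid s hs
          have hc1 : p.Chain' (fun a b => G.NAdj a b ∧ a ≠ y ∧ b ≠ y) :=
            qtdChainStrengthen hp.2.2.1 (fun v hv => fun he => hy1 (he ▸ hv))
          have hr := qtdChainRTG p u0 s hp.1 hp.2.1 hc1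
          obtain ⟨hw, hr2⟩ := qtdRtgRestrict (A := A) (fun a b _ hab => hab.2.2) hr hu0A
          refine Relation.ReflTransGen.mono ?_ _ _ hr2
          intro a b h; exact ⟨fun he => h.1.1 (congrArg Subtype.val he), h.1.2.1, h.1.2.2⟩
        intro s t
        exact (con_symm (key s)).trans (key t)
      have hcardA : Fintype.card A = Fintype.card V - 1 := by
        have k1 : Fintype.card {z : V // ¬ z = y} = Fintype.card V - Fintype.card {z : V // z = y} :=
          Fintype.card_subtype_compl _
        rw [Fintype.card_subtype_eq] at k1
        have k2 : Fintype.card A = Fintype.card {z : V // ¬ z = y} :=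
          Fintype.card_congr (Equiv.subtypeEquivRight (fun z => by simp [hAdef]))
        rw [k2, k1]
      exact ih G' hqt' hstr' (by omega) (by omega) hconn'

end Digr

/-- Every strong quasi-transitive digraph D is a composition
H[S₁,…,S_h] where H is a strong semicomplete digraph and each part Sᵢ is a
quasi-transitive digraph which is either a single vertex or non-strong. -/
theorem strong_quasi_transitive_decomposition {V : Type} [Fintype V]
    (G : Digr V) (hqt : G.QuasiTransitive) (hstrong : G.IsStrong) :
    ∃ (ι : Type) (_ : Fintype ι) (H : Digr ι) (φ : V → ι),
      Digr.IsCompositionOver G H φ ∧ H.Semicomplete ∧ H.IsStrong ∧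
      (∀ i : ι, (G.induce {v : V | φ v = i}).QuasiTransitive) ∧
      (∀ i : ι, Set.ncard {v : V | φ v = i} = 1 ∨
        ¬ (G.induce {v : V | φ v = i}).IsStrong) := by
  classical
  set s : Setoid V := ⟨G.Con, ⟨fun _ => Relation.ReflTransGen.refl,
    fun h => Digr.con_symm h, fun h1 h2 => h1.trans h2⟩⟩ with hsdef
  set φ : V → Quotient s := fun v => Quotient.mk s v with hphidef
  have hFin : Fintype (Quotient s) := Quotient.fintype s
  have hphi : ∀ u v : V, φ u = φ v ↔ G.Con u v := fun u v => Quotient.eq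
  set H : Digr (Quotient s) := ⟨fun a b => a ≠ b ∧ ∃ u' v', φ u' = a ∧ φ v' = b ∧ G.Adj u' v',
    fun a h => h.1 rfl⟩ with hHdef
  have hsurj : Function.Surjective φ := by
    intro b
    induction b using Quotient.ind with | _ v => exact ⟨v, rfl⟩
  -- transfer of arcs between representatives of classes
  have transfer : ∀ u v u' v' : V, φ u = φ u' → φ v = φ v' → φ u ≠ φ v →
      G.Adj u' v' → G.Adj u v := by
    intro u v u' v' huu hvv hne hadj
    have hc1 : G.Con u' u := Digr.con_symm ((hphi u u').1 huu)
    have hc2 : G.Con v' v := Digr.con_symm ((hphi v v').1 hvv)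
    have hz1 : ¬ G.Con u' v' := by
      intro hc
      apply hne
      rw [huu, hvv]
      exact (hphi u' v').2 hc
    have e1 := (Digr.class_transfer hqt hc1 hz1).2
    have hz2 : ¬ G.Con v' u := by
      intro hc
      apply hne
      rw [hvv]
      exact ((hphi v' u).2 hc).symm
    have e2 := (Digr.class_transfer hqt hc2 hz2).1
    exact e2.mp (e1.mp hadj)
  have hcomp : Digr.IsCompositionOver G H φ := by
    refine ⟨hsurj, ?_⟩
    intro u v hne
    constructor
    · intro hadj
      exact ⟨hne, u, v, rfl, rfl, hadj⟩
    · rintro ⟨-, u', v', hu', hv', hadj⟩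
      exact transfer u v u' v' hu'.symm hv'.symm hne hadj
  have hsemi : H.Semicomplete := by
    intro a b hne
    induction a using Quotient.ind with | _ u =>
    induction b using Quotient.ind with | _ v =>
    have hne' : φ u ≠ φ v := hne
    have huv : u ≠ v := fun he => hne' (he ▸ rfl)
    have hadj : G.Adj u v ∨ G.Adj v u := by
      by_contra hcon
      push_neg at hcon
      exact hne' ((hphi u v).2 (Relation.ReflTransGen.single ⟨huv, hcon.1, hcon.2⟩))
    rcases hadj with h | h
    · exact Or.inl ⟨hne, u, v, rfl, rfl, h⟩
    · exact Or.inr ⟨Ne.symm hne, v, u, rfl, rfl, h⟩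
  have hHstrong : H.IsStrong := by
    intro a b hne
    induction a using Quotient.ind with | _ u =>
    induction b using Quotient.ind with | _ v =>
    have hne' : φ u ≠ φ v := hne
    have huv : u ≠ v := fun he => hne' (he ▸ rfl)
    obtain ⟨p, hh, hl, hc, -⟩ := hstrong u v huv
    have hr : Relation.ReflTransGen G.Adj u v := qtdChainRTG p u v hh hl hc
    have proj : ∀ a' b' : V, Relation.ReflTransGen G.Adj a' b' →
        Relation.ReflTransGen H.Adj (φ a') (φ b') := by
      intro a' b' hr'
      induction hr' with
      | refl => exact Relation.ReflTransGen.refl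
      | tail hab hbc ih =>
        rename_i bb cc
        by_cases he : φ bb = φ cc
        · rwa [← he]
        · exact ih.tail ⟨he, bb, cc, rfl, rfl, hbc⟩
    obtain ⟨q, k1, k2, k3, k4⟩ := qtdExtract (proj u v hr)
    exact ⟨q, k1, k2, k3, k4⟩
  refine ⟨Quotient s, hFin, H, φ, hcomp, hsemi, hHstrong, ?_, ?_⟩
  · intro i a b c h1 h2 hne
    exact hqt a b c h1 h2 (fun he => hne (Subtype.ext he))
  · intro i
    by_cases hone : Set.ncard {v : V | φ v = i} = 1
    · exact Or.inl hone
    right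
    intro hstrongS
    set S : Set V := {v : V | φ v = i} with hSdef
    obtain ⟨w0, hw0⟩ := hsurj i
    have hw0S : w0 ∈ S := hw0
    have hSfin : S.Finite := Set.toFinite S
    have hcard : S.ncard = Fintype.card S := by
      rw [← Nat.card_coe_set_eq, Nat.card_eq_fintype_card]
    have hpos : 0 < S.ncard := (Set.ncard_pos hSfin).2 ⟨w0, hw0S⟩
    have h1 : 1 < Fintype.card S := by
      rw [← hcard]
      omega
    have hqtS : (G.induce S).QuasiTransitive := fun a b c k1 k2 kne =>
      hqt a b c k1 k2 (fun he => kne (Subtype.ext he))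
    have hconnS : ∀ a b : S, (G.induce S).Con a b := by
      rintro ⟨a, ha⟩ ⟨b, hb⟩
      have hab : G.Con a b := (hphi a b).1 (by rw [show φ a = i from ha, show φ b = i from hb])
      have hmemstep : ∀ c e : V, c ∈ S → G.NAdj c e → e ∈ S := by
        intro c e hcS hce
        have : φ c = φ e := (hphi c e).2 (Relation.ReflTransGen.single hce)
        show φ e = i
        rw [← this]
        exact hcS
      obtain ⟨hw, hr⟩ := qtdRtgRestrict (A := S) hmemstep hab ha
      refine Relation.ReflTransGen.mono ?_ _ _ hr
      intro c e h; exact ⟨fun he => h.1 (congrArg Subtype.val he), h.2.1, h.2.2⟩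
    exact Digr.claimB (Fintype.card S) (G.induce S) hqtS hstrongS le_rfl h1 hconnS
end

section
/- Every semicomplete digraph D contains a nearly in-dominating vertex, i.e., a vertex u such that for every natural number c, all but at most 2c vertices of D are c-good for u. -/
namespace Digr

/-- `v` is c-good for `u` in `G`: either the arc vu is present, or there are at
least c independent (v,u)-paths of length 2 (i.e. c distinct midpoints m with
arcs vm and mu). -/
def CGood {V : Type} (G : Digr V) (c : ℕ) (v u : V) : Prop :=
  G.Adj v u ∨ ∃ M : Finset V, c ≤ M.card ∧ ∀ m ∈ M, G.Adj v m ∧ G.Adj m u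

end Digr


open Classical in
/-- In a semicomplete digraph, any nonempty finset contains a vertex whose
in-degree within the finset is at least (|S|-1)/2. -/
private lemma Digr.exists_big_indeg {V : Type} [Fintype V] (G : Digr V)
    (hsc : G.Semicomplete) (S : Finset V) (hS : S.Nonempty) :
    ∃ v ∈ S, S.card ≤ 2 * (S.filter (fun w => G.Adj w v)).card + 1 := by
  classical
  -- pointwise : every vertex sees all others one way or the other
  have key : ∀ v ∈ S, S.card ≤
      (S.filter (fun w => G.Adj w v)).card + (S.filter (fun w => G.Adj v w)).card + 1 := by
    intro v hv
    have hsub : S ⊆ (S.filter (fun w => G.Adj w v)) ∪ (S.filter (fun w => G.Adj v w)) ∪ {v} := by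
      intro w hw
      by_cases hwv : w = v
      · subst hwv; simp
      · rcases hsc w v hwv with h | h
        · exact Finset.mem_union_left _ (Finset.mem_union_left _ (Finset.mem_filter.2 ⟨hw, h⟩))
        · exact Finset.mem_union_left _ (Finset.mem_union_right _ (Finset.mem_filter.2 ⟨hw, h⟩))
    calc S.card ≤ _ := Finset.card_le_card hsub
      _ ≤ _ + ({v} : Finset V).card := Finset.card_union_le _ _
      _ ≤ _ + 1 := by
          simp only [Finset.card_singleton]
          exact Nat.add_le_add_right (Finset.card_union_le _ _) 1
  -- sum of in-degrees equals sum of out-degrees inside S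
  have hswap : (∑ v ∈ S, (S.filter (fun w => G.Adj w v)).card)
      = ∑ v ∈ S, (S.filter (fun w => G.Adj v w)).card := by
    simp only [Finset.card_filter]
    rw [Finset.sum_comm]
  have hsum : (∑ _v ∈ S, S.card) ≤ ∑ v ∈ S, (2 * (S.filter (fun w => G.Adj w v)).card + 1) := by
    have h1 : (∑ _v ∈ S, S.card) ≤
        ∑ v ∈ S, ((S.filter (fun w => G.Adj w v)).card + (S.filter (fun w => G.Adj v w)).card + 1) :=
      Finset.sum_le_sum key
    have h2 : ∑ v ∈ S, (2 * (S.filter (fun w => G.Adj w v)).card + 1)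
        = ∑ v ∈ S, ((S.filter (fun w => G.Adj w v)).card + (S.filter (fun w => G.Adj v w)).card + 1) := by
      simp only [two_mul, Finset.sum_add_distrib]
      rw [hswap]
    exact h1.trans (le_of_eq h2.symm)
  obtain ⟨v, hv, hle⟩ := Finset.exists_le_of_sum_le hS hsum
  exact ⟨v, hv, hle⟩

private lemma ncard_setOf_eq_filter {V : Type} [Fintype V] (p : V → Prop) [DecidablePred p] :
    Set.ncard {v | p v} = (Finset.univ.filter p).card := by
  rw [Set.ncard_eq_toFinset_card']
  simp

/-- Every semicomplete digraph contains a nearly in-dominating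
vertex u: for every c ∈ ℕ, all but at most 2c vertices are c-good for u. -/
theorem semicomplete_has_nearly_in_dominating_vertex {V : Type} [Fintype V]
    [Nonempty V] (G : Digr V) (hsc : G.Semicomplete) :
    ∃ u : V, ∀ c : ℕ, Set.ncard {v : V | ¬ G.CGood c v u} ≤ 2 * c := by
  classical
  -- choose u of maximum in-degree
  obtain ⟨u, -, hu⟩ := Finset.exists_max_image Finset.univ (fun v => G.inDeg v)
    ⟨Classical.arbitrary V, Finset.mem_univ _⟩
  refine ⟨u, fun c => ?_⟩
  rcases Nat.eq_zero_or_pos c with rfl | hc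
  · -- c = 0 : everything is 0-good
    have : {v : V | ¬ G.CGood 0 v u} = ∅ := by
      ext v; simp only [Set.mem_setOf_eq, Set.mem_empty_iff_false, iff_false, not_not]
      exact Or.inr ⟨∅, by simp⟩
    simp [this]
  · by_contra hcon
    push_neg at hcon
    rw [ncard_setOf_eq_filter] at hcon
    set B : Finset V := Finset.univ.filter (fun v => ¬ G.CGood c v u) with hBdef
    set B' : Finset V := B.erase u with hB'def
    have hBcard : 2 * c + 1 ≤ B.card := hcon
    have hB'card : 2 * c ≤ B'.card := by
      by_cases huB : u ∈ B
      · rw [hB'def, Finset.card_erase_of_mem huB]; omega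
      · rw [hB'def, Finset.erase_eq_of_notMem huB]; omega
    have hB'ne : B'.Nonempty := Finset.card_pos.1 (by omega)
    obtain ⟨v, hvB', hv⟩ := G.exists_big_indeg hsc B' hB'ne
    -- basic facts about v
    have hvB : v ∈ B := Finset.mem_of_mem_erase hvB'
    have hvu : v ≠ u := Finset.ne_of_mem_erase hvB'
    have hvbad : ¬ G.CGood c v u := (Finset.mem_filter.1 hvB).2
    have hnadj : ¬ G.Adj v u := fun h => hvbad (Or.inl h)
    -- midpoints
    set Mv : Finset V := Finset.univ.filter (fun m => G.Adj v m ∧ G.Adj m u) with hMvdef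
    have hMv : Mv.card < c := by
      by_contra hM
      push_neg at hM
      exact hvbad (Or.inr ⟨Mv, hM, fun m hm => (Finset.mem_filter.1 hm).2⟩)
    set Nu : Finset V := Finset.univ.filter (fun w => G.Adj w u) with hNudef
    set Nv : Finset V := Finset.univ.filter (fun w => G.Adj w v) with hNvdef
    set A1 : Finset V := Nu.filter (fun m => G.Adj m v) with hA1def
    set A2 : Finset V := B'.filter (fun w => G.Adj w v) with hA2def
    -- Nu ⊆ A1 ∪ Mv
    have hNuA1 : Nu.card ≤ A1.card + Mv.card := by
      have hsub : Nu ⊆ A1 ∪ Mv := by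
        intro m hm
        have hmu : G.Adj m u := (Finset.mem_filter.1 hm).2
        by_cases hmv : G.Adj m v
        · exact Finset.mem_union_left _ (Finset.mem_filter.2 ⟨hm, hmv⟩)
        · have hmne : m ≠ v := by rintro rfl; exact hnadj hmu
          rcases hsc m v hmne with h | h
          · exact absurd h hmv
          · exact Finset.mem_union_right _
              (Finset.mem_filter.2 ⟨Finset.mem_univ _, h, hmu⟩)
      calc Nu.card ≤ (A1 ∪ Mv).card := Finset.card_le_card hsub
        _ ≤ A1.card + Mv.card := Finset.card_union_le _ _
    -- A1, A2 and {u} are disjoint subsets of Nv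
    have hadj_uv : G.Adj u v := by
      rcases hsc v u hvu with h | h
      · exact absurd h hnadj
      · exact h
    have hdisj12 : Disjoint A1 A2 := by
      rw [Finset.disjoint_left]
      intro w hw1 hw2
      have hwu : G.Adj w u := (Finset.mem_filter.1 ((Finset.mem_filter.1 hw1).1)).2
      have hwB : w ∈ B := Finset.mem_of_mem_erase (Finset.mem_filter.1 hw2).1
      exact (Finset.mem_filter.1 hwB).2 (Or.inl hwu)
    have hu1 : u ∉ A1 := by
      intro h
      exact G.irrefl u (Finset.mem_filter.1 (Finset.mem_filter.1 h).1).2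
    have hu2 : u ∉ A2 := fun h =>
      (Finset.notMem_erase u B) (Finset.mem_filter.1 h).1
    have hNvcard : A1.card + A2.card + 1 ≤ Nv.card := by
      have hsub : (A1 ∪ A2) ∪ {u} ⊆ Nv := by
        intro w hw
        rcases Finset.mem_union.1 hw with hw | hw
        · rcases Finset.mem_union.1 hw with hw | hw
          · exact Finset.mem_filter.2 ⟨Finset.mem_univ _, (Finset.mem_filter.1 hw).2⟩
          · exact Finset.mem_filter.2 ⟨Finset.mem_univ _, (Finset.mem_filter.1 hw).2⟩
        · rw [Finset.mem_singleton.1 hw]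
          exact Finset.mem_filter.2 ⟨Finset.mem_univ _, hadj_uv⟩
      have hd : Disjoint (A1 ∪ A2) ({u} : Finset V) := by
        rw [Finset.disjoint_singleton_right]
        intro h
        rcases Finset.mem_union.1 h with h | h
        · exact hu1 h
        · exact hu2 h
      calc A1.card + A2.card + 1
          = (A1 ∪ A2).card + ({u} : Finset V).card := by
            rw [Finset.card_union_of_disjoint hdisj12, Finset.card_singleton]
        _ = ((A1 ∪ A2) ∪ {u}).card := (Finset.card_union_of_disjoint hd).symm
        _ ≤ Nv.card := Finset.card_le_card hsub
    -- A2 has at least c elements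
    have hA2card : c ≤ A2.card := by
      have := hv
      omega
    -- degrees
    have hdegu : G.inDeg u = Nu.card := ncard_setOf_eq_filter _
    have hdegv : G.inDeg v = Nv.card := ncard_setOf_eq_filter _
    have hmax : G.inDeg v ≤ G.inDeg u := hu v (Finset.mem_univ v)
    omega
end

section
/- Let D be a semicomplete digraph, let T be any spanning tournament of D (a spanning subdigraph with exactly one arc between every pair of distinct vertices), and let u be a vertex of maximum in-degree in T. Then u is a nearly in-dominating vertex of D: for every natural number c, all but at most 2c vertices of D are c-good for u in D. -/
namespace Digr

/-- A tournament: exactly one arc between any two distinct vertices. -/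
def IsTournament {V : Type} (T : Digr V) : Prop :=
  ∀ u v : V, u ≠ v → (T.Adj u v ↔ ¬ T.Adj v u)

end Digr

/-- If T is a spanning tournament of a semicomplete digraph D and
u has maximum in-degree in T, then u is a nearly in-dominating vertex of D. -/
theorem max_in_degree_is_nearly_in_dominating {V : Type} [Fintype V]
    (G T : Digr V) (hsc : G.Semicomplete)
    (hsub : ∀ u v : V, T.Adj u v → G.Adj u v)
    (htour : T.IsTournament)
    (u : V) (hmax : ∀ w : V, T.inDeg w ≤ T.inDeg u) :
    ∀ c : ℕ, Set.ncard {v : V | ¬ G.CGood c v u} ≤ 2 * c := by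
  classical
  intro c
  have hset : {v : V | ¬ G.CGood c v u} = ↑(Finset.univ.filter (fun v => ¬ G.CGood c v u)) := by
    ext v; simp
  rw [hset, Set.ncard_coe_finset]
  set Bad := Finset.univ.filter (fun v => ¬ G.CGood c v u) with hBadDef
  rcases Nat.eq_zero_or_pos c with rfl | hc
  · have hBe : Bad = ∅ := by
      ext v
      simp only [hBadDef, Finset.mem_filter, Finset.mem_univ, true_and,
        Finset.notMem_empty, iff_false, not_not]
      exact Or.inr ⟨∅, by simp, by simp⟩
    simp [hBe]
  -- basic facts about bad vertices
  have hBadmem : ∀ v ∈ Bad, ¬ G.Adj v u ∧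
      ∀ M : Finset V, c ≤ M.card → ¬ ∀ m ∈ M, G.Adj v m ∧ G.Adj m u := by
    intro v hv
    have hnot : ¬ G.CGood c v u := (Finset.mem_filter.mp hv).2
    exact ⟨fun h => hnot (Or.inl h), fun M hM hall => hnot (Or.inr ⟨M, hM, hall⟩)⟩
  have hmid : ∀ v ∈ Bad,
      (Finset.univ.filter (fun m => G.Adj v m ∧ G.Adj m u)).card ≤ c - 1 := by
    intro v hv
    by_contra h
    push_neg at h
    have hcle : c ≤ (Finset.univ.filter (fun m => G.Adj v m ∧ G.Adj m u)).card := by omega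
    exact (hBadmem v hv).2 _ hcle (fun m hm => (Finset.mem_filter.mp hm).2)
  set B := Bad.erase u with hBdef
  set N := Finset.univ.filter (fun m => T.Adj m u) with hNdef
  set d := N.card with hddef
  have hin : ∀ v : V, T.inDeg v = (Finset.univ.filter (fun w => T.Adj w v)).card := by
    intro v
    have h : {w : V | T.Adj w v} = ↑(Finset.univ.filter (fun w => T.Adj w v)) := by
      ext w; simp
    rw [Digr.inDeg, h, Set.ncard_coe_finset]
  have hNB : ∀ m ∈ N, m ∉ Bad := by
    intro m hm hmB
    have hTmu : T.Adj m u := (Finset.mem_filter.mp hm).2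
    exact (hBadmem m hmB).1 (hsub _ _ hTmu)
  -- key: every vertex of B has at most c - 2 in-neighbours inside B
  have key : ∀ v ∈ B, (B.filter (fun w => T.Adj w v)).card + 2 ≤ c := by
    intro v hv
    have hvBad : v ∈ Bad := Finset.mem_of_mem_erase hv
    have hvne : v ≠ u := Finset.ne_of_mem_erase hv
    have hvGu : ¬ G.Adj v u := (hBadmem v hvBad).1
    have hvTu : ¬ T.Adj v u := fun h => hvGu (hsub _ _ h)
    have hTuv : T.Adj u v := (htour u v (Ne.symm hvne)).mpr hvTu
    have hvN : v ∉ N := by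
      simp only [hNdef, Finset.mem_filter, Finset.mem_univ, true_and]
      exact hvTu
    have huN : u ∉ N := by
      simp only [hNdef, Finset.mem_filter, Finset.mem_univ, true_and]
      exact T.irrefl u
    set F := N.filter (fun m => T.Adj v m) with hFdef
    set I := N.filter (fun m => T.Adj m v) with hIdef
    have hFI : F.card + I.card = d := by
      have hIeq : I = N.filter (fun m => ¬ T.Adj v m) := by
        apply Finset.filter_congr
        intro m hm
        have hmv : m ≠ v := fun h => hvN (h ▸ hm)
        simpa using (htour m v hmv)
      rw [hIeq]
      exact Finset.card_filter_add_card_filter_not _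
    have hFle : F.card ≤ c - 1 := by
      refine le_trans (Finset.card_le_card ?_) (hmid v hvBad)
      intro m hm
      rcases Finset.mem_filter.mp hm with ⟨hmN, hvm⟩
      have hmu : T.Adj m u := (Finset.mem_filter.mp hmN).2
      exact Finset.mem_filter.mpr ⟨Finset.mem_univ m, hsub _ _ hvm, hsub _ _ hmu⟩
    -- the in-neighbourhood of v contains I, u, and the in-neighbours in B
    set S := B.filter (fun w => T.Adj w v) with hSdef
    have hdisj1 : Disjoint I {u} := by
      simp only [Finset.disjoint_singleton_right]
      intro huI
      exact huN (Finset.mem_of_mem_filter u huI)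
    have hdisj2 : Disjoint (I ∪ {u}) S := by
      rw [Finset.disjoint_left]
      intro w hw hwS
      have hwB : w ∈ B := Finset.mem_of_mem_filter w hwS
      rcases Finset.mem_union.mp hw with h | h
      · exact hNB w (Finset.mem_of_mem_filter w h) (Finset.mem_of_mem_erase hwB)
      · have : w = u := Finset.mem_singleton.mp h
        exact (Finset.ne_of_mem_erase hwB) this
    have hsub2 : I ∪ {u} ∪ S ⊆ Finset.univ.filter (fun w => T.Adj w v) := by
      intro w hw
      refine Finset.mem_filter.mpr ⟨Finset.mem_univ w, ?_⟩
      rcases Finset.mem_union.mp hw with h | h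
      · rcases Finset.mem_union.mp h with h' | h'
        · exact (Finset.mem_filter.mp h').2
        · have : w = u := Finset.mem_singleton.mp h'
          exact this ▸ hTuv
      · exact (Finset.mem_filter.mp h).2
    have hcard : I.card + 1 + S.card ≤ d := by
      have h1 : (I ∪ {u} ∪ S).card = I.card + 1 + S.card := by
        rw [Finset.card_union_of_disjoint hdisj2, Finset.card_union_of_disjoint hdisj1,
          Finset.card_singleton]
      calc I.card + 1 + S.card = (I ∪ {u} ∪ S).card := h1.symm
        _ ≤ (Finset.univ.filter (fun w => T.Adj w v)).card := Finset.card_le_card hsub2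
        _ = T.inDeg v := (hin v).symm
        _ ≤ T.inDeg u := hmax v
        _ = d := by rw [hin u]
    have hFd : F.card ≤ d := by omega
    omega
  -- double counting inside the tournament restricted to B
  set b := B.card with hbdef
  have hcount : 2 * (∑ v ∈ B, (B.filter (fun w => T.Adj w v)).card) + b = b * b := by
    have hone : ∀ v ∈ B, ∀ w ∈ B,
        ((if T.Adj w v then 1 else 0) + (if T.Adj v w then 1 else 0)
          + (if w = v then 1 else 0)) = 1 := by
      intro v _ w _
      by_cases hwv : w = v
      · subst hwv
        simp [T.irrefl w]
      · have h := htour w v hwv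
        by_cases h1 : T.Adj w v
        · have h2 : ¬ T.Adj v w := h.mp h1
          simp [h1, h2, hwv]
        · have h2 : T.Adj v w := by
            by_contra h2
            exact h1 (h.mpr h2)
          simp [h1, h2, hwv]
      
    have htot : ∑ v ∈ B, ∑ w ∈ B,
        ((if T.Adj w v then 1 else 0) + (if T.Adj v w then 1 else 0)
          + (if w = v then 1 else 0)) = b * b := by
      rw [Finset.sum_congr rfl (fun v hv => Finset.sum_congr rfl (fun w hw => hone v hv w hw))]
      simp [mul_comm, hbdef]
    have hsplit : ∑ v ∈ B, ∑ w ∈ B,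
        ((if T.Adj w v then 1 else 0) + (if T.Adj v w then 1 else 0)
          + (if w = v then 1 else 0))
        = (∑ v ∈ B, ∑ w ∈ B, (if T.Adj w v then 1 else 0))
          + (∑ v ∈ B, ∑ w ∈ B, (if T.Adj v w then 1 else 0))
          + (∑ v ∈ B, ∑ w ∈ B, (if w = v then 1 else 0)) := by
      simp [Finset.sum_add_distrib]
    have hswap : (∑ v ∈ B, ∑ w ∈ B, (if T.Adj v w then 1 else 0))
        = (∑ v ∈ B, ∑ w ∈ B, (if T.Adj w v then 1 else 0)) := by rw [Finset.sum_comm]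
    have hdiag : (∑ v ∈ B, ∑ w ∈ B, (if w = v then 1 else 0)) = b := by
      have : ∀ v ∈ B, (∑ w ∈ B, (if w = v then 1 else 0)) = 1 := by
        intro v hv
        rw [Finset.sum_ite_eq' B v (fun _ => 1)]
        simp [hv]
      rw [Finset.sum_congr rfl this]
      simp [hbdef]
    have hcardsum : ∀ v : V, (B.filter (fun w => T.Adj w v)).card
        = ∑ w ∈ B, (if T.Adj w v then 1 else 0) := by
      intro v
      rw [Finset.card_filter]
    rw [Finset.sum_congr rfl (fun v _ => hcardsum v)]
    omega
    
  have hub : (∑ v ∈ B, (B.filter (fun w => T.Adj w v)).card) + 2 * b ≤ b * c := by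
    calc (∑ v ∈ B, (B.filter (fun w => T.Adj w v)).card) + 2 * b
        = ∑ v ∈ B, ((B.filter (fun w => T.Adj w v)).card + 2) := by
          rw [Finset.sum_add_distrib]
          simp [mul_comm, hbdef]
      _ ≤ ∑ _v ∈ B, c := Finset.sum_le_sum key
      _ = b * c := by simp [mul_comm, hbdef]
  have hBadle : Bad.card ≤ b + 1 := by
    have : Bad ⊆ insert u B := by
      intro v hv
      rcases eq_or_ne v u with rfl | hne
      · exact Finset.mem_insert_self _ _
      · exact Finset.mem_insert_of_mem (Finset.mem_erase.mpr ⟨hne, hv⟩)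
    calc Bad.card ≤ (insert u B).card := Finset.card_le_card this
      _ ≤ b + 1 := Finset.card_insert_le _ _
  rcases Nat.eq_zero_or_pos b with hb0 | hbpos
  · omega
  · have : b * b + 3 * b ≤ 2 * (b * c) := by omega
    have hble : b + 3 ≤ 2 * c := by
      have h2 : b * (b + 3) ≤ b * (2 * c) := by ring_nf; ring_nf at this; omega
      exact Nat.le_of_mul_le_mul_left h2 hbpos
    omega
end

section
/- Let D be a digraph with three pairwise disjoint vertex subsets X, Y and W such that |X| = |Y| = k. Suppose U is a nearly in-dominating set of D \ (X ∪ Y) of order 3k, and Q is a collection of k pairwise vertex-disjoint paths from U to Y having the minimum number of vertices among all such collections. If there exists a set A ⊆ V(D) \ (W ∪ Ini(Q)) of order at most k such that each vertex a ∈ A has at least 7k + 3|W| + 7|A| out-neighbours in D \ (X ∪ Y ∪ U), each of which is a 1-in-dominator of U \ Ini(Q), then A short anchors every subset S ⊆ Ini(Q) \ W with |S| = |A| in the subdigraph of D induced by the vertex set (V(D) \ (V(Q) ∪ W ∪ X)) ∪ (S ∪ A). -/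
namespace Digr

/-- `v` is c-good for `u` in the subdigraph of `G` induced on `A`: either the
arc vu is present, or there are at least c distinct midpoints in `A` giving
independent (v,u)-paths of length 2. -/
def CGoodOn {V : Type} (G : Digr V) (A : Set V) (c : ℕ) (v u : V) : Prop :=
  G.Adj v u ∨ ∃ M : Finset V, c ≤ M.card ∧ ∀ m ∈ M, (m : V) ∈ A ∧ G.Adj v m ∧ G.Adj m u

/-- The set of initial vertices of a collection of paths. -/
def IniSet {V : Type} {k : ℕ} (Q : Fin k → List V) : Set V :=
  {v | ∃ i, (Q i).head? = some v}

/-- The set of all vertices of a collection of paths. -/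
def VSet {V : Type} {k : ℕ} (Q : Fin k → List V) : Set V :=
  {v | ∃ i, v ∈ Q i}

end Digr

namespace Digr

/-- For disjoint vertex sets A and S, A short anchors S within the vertex set T:
for every bijection e from A to S there are pairwise disjoint paths, each of
length at most 3 (at most 4 vertices), with all vertices in T, joining each
a ∈ A to e(a). -/
def ShortAnchorsOn {V : Type} (G : Digr V) (T : Set V) (A S : Finset V) : Prop :=
  ∀ e : {x // x ∈ A} ≃ {y // y ∈ S},
    ∃ P : {x // x ∈ A} → List V,
      (∀ a, G.IsPathOn T (P a) (a : V) ((e a : V)) ∧ (P a).length ≤ 4) ∧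
      (∀ a b, a ≠ b → ∀ v, v ∈ P a → v ∉ P b)

end Digr


section Aux
open List

lemma auxGetLastDrop {α : Type*} (l : List α) (p : ℕ) (hp : p < l.length) :
    (l.drop p).getLast? = l.getLast? := by
  rw [getLast?_eq_getElem?, getLast?_eq_getElem?, length_drop, getElem?_drop]
  congr 1; omega

lemma auxMemTakeOne {α : Type*} {a : α} {l : List α} : a ∈ l.take 1 ↔ l.head? = some a := by
  cases l <;> simp [eq_comm]

lemma auxMemTake {α : Type*} {l : List α} {p n : ℕ} (hp : p < n) (hl : p < l.length) :
    l[p] ∈ l.take n := by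
  have h : p < (l.take n).length := by rw [length_take]; omega
  have : (l.take n)[p] = l[p] := List.getElem_take
  exact this ▸ List.getElem_mem h

lemma auxPick {α : Type*} [DecidableEq α] {B bad : Finset α} (h : bad.card < B.card) :
    ∃ x ∈ B, x ∉ bad := by
  have h2 : 0 < (B \ bad).card := by
    have := Finset.card_le_card_sdiff_add_card (s := B) (t := bad)
    omega
  obtain ⟨x, hx⟩ := Finset.card_pos.1 h2
  exact ⟨x, (Finset.mem_sdiff.1 hx).1, (Finset.mem_sdiff.1 hx).2⟩

end Aux

set_option maxHeartbeats 3000000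

/-- Lemma 2.2. -/
theorem short_anchor_lemma {V : Type} [Fintype V] [DecidableEq V] (G : Digr V) (k : ℕ)
    (X Y W : Finset V)
    (hXY : Disjoint X Y) (hXW : Disjoint X W) (hYW : Disjoint Y W)
    (hX : X.card = k) (hY : Y.card = k)
    -- U is a nearly in-dominating set of D \ (X ∪ Y) of order 3k:
    (U : Finset V) (hUcard : U.card = 3 * k)
    (hUsub : ∀ u ∈ U, u ∉ X ∪ Y)
    (hUdom : ∀ u ∈ U, ∀ c : ℕ,
      Set.ncard {v : V | v ∉ X ∪ Y ∧ v ∉ U ∧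
        ¬ G.CGoodOn ((↑(X ∪ Y) : Set V)ᶜ) c v u} ≤ 2 * c)
    -- Q is a collection of k disjoint paths from U to Y with minimum number of vertices:
    (Q : Fin k → List V)
    (hQpaths : ∀ i, ∃ u ∈ U, ∃ z ∈ Y, G.IsPathFrom (Q i) u z)
    (hQdisj : ∀ i j, i ≠ j → ∀ v, v ∈ Q i → v ∉ Q j)
    (hQmin : ∀ Q' : Fin k → List V,
      (∀ i, ∃ u ∈ U, ∃ z ∈ Y, G.IsPathFrom (Q' i) u z) →
      (∀ i j, i ≠ j → ∀ v, v ∈ Q' i → v ∉ Q' j) →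
      (∑ i, (Q i).length) ≤ (∑ i, (Q' i).length))
    -- A ⊆ V(D) \ (W ∪ Ini(Q)) of order at most k, such that each a ∈ A has at
    -- least 7k + 3|W| + 7|A| out-neighbours in D \ (X ∪ Y ∪ U), each of which
    -- is a 1-in-dominator of U \ Ini(Q):
    (A : Finset V) (hAcard : A.card ≤ k)
    (hAsub : ∀ a ∈ A, a ∉ W ∧ (a : V) ∉ Digr.IniSet Q)
    (hAdeg : ∀ a ∈ A, ∃ B : Finset V,
      7 * k + 3 * W.card + 7 * A.card ≤ B.card ∧
      ∀ b ∈ B, G.Adj a b ∧ b ∉ X ∪ Y ∪ U ∧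
        ∃ z ∈ U, (z : V) ∉ Digr.IniSet Q ∧ G.Adj z b) :
    -- Conclusion: A short anchors every S ⊆ Ini(Q) \ W with |S| = |A| in the
    -- subdigraph induced by (V(D) \ (V(Q) ∪ W ∪ X)) ∪ (S ∪ A):
    ∀ S : Finset V, (↑S : Set V) ⊆ Digr.IniSet Q \ ↑W → S.card = A.card →
      G.ShortAnchorsOn
        ((Set.univ \ (Digr.VSet Q ∪ ↑W ∪ ↑X)) ∪ (↑S ∪ ↑A)) A S := by
  classical
  intro S hS hScard e
  by_cases hAe : ¬ A.Nonempty
  · refine ⟨fun _ => [], fun a => absurd (Finset.nonempty_of_ne_empty ?_) hAe, fun a b _ => absurd (Finset.nonempty_of_ne_empty ?_) hAe⟩ <;>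
      exact fun h => (by simp [h] at a; exact a.2.elim : False).elim
  push_neg at hAe
  obtain ⟨a₀, ha₀⟩ := hAe
  set m := A.card with hm
  set C := 3 * k + W.card + 3 * m with hC
  set σ := A.equivFin with hσ
  set aN : ℕ → V := fun i => if h : i < m then ((σ.symm ⟨i, h⟩ : {x // x ∈ A}) : V) else a₀ with haN
  set sN : ℕ → V := fun i => if h : i < m then ((e (σ.symm ⟨i, h⟩) : {y // y ∈ S}) : V) else a₀ with hsN
  have haNA : ∀ i, i < m → aN i ∈ A := by
    intro i hi; simp only [haN, dif_pos hi]; exact (σ.symm ⟨i, hi⟩).2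
  have hsNS : ∀ i, i < m → sN i ∈ S := by
    intro i hi; simp only [hsN, dif_pos hi]; exact (e (σ.symm ⟨i, hi⟩)).2
  have haNinj : ∀ i j, i < m → j < m → aN i = aN j → i = j := by
    intro i j hi hj hij
    simp only [haN, dif_pos hi, dif_pos hj] at hij
    have := σ.symm.injective (Subtype.ext hij)
    exact congrArg Fin.val this
  have hsNinj : ∀ i j, i < m → j < m → sN i = sN j → i = j := by
    intro i j hi hj hij
    simp only [hsN, dif_pos hi, dif_pos hj] at hij
    have := σ.symm.injective (e.injective (Subtype.ext hij))
    exact congrArg Fin.val this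
  -- basic facts about Q
  have headU : ∀ j, ∃ u ∈ U, (Q j).head? = some u := by
    intro j; obtain ⟨u, hu, z, hz, hp⟩ := hQpaths j; exact ⟨u, hu, hp.1⟩
  have lastY : ∀ j, ∃ z ∈ Y, (Q j).getLast? = some z := by
    intro j; obtain ⟨u, hu, z, hz, hp⟩ := hQpaths j; exact ⟨z, hz, hp.2.1⟩
  have hChain : ∀ j, (Q j).Chain' G.Adj := by
    intro j; obtain ⟨u, hu, z, hz, hp⟩ := hQpaths j; exact hp.2.2.1
  have hNodup : ∀ j, (Q j).Nodup := by
    intro j; obtain ⟨u, hu, z, hz, hp⟩ := hQpaths j; exact hp.2.2.2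
  -- facts about S
  have hSIni : ∀ x ∈ S, x ∈ Digr.IniSet Q := fun x hx => (hS hx).1
  have hSW : ∀ x ∈ S, x ∉ W := fun x hx => by
    have := (hS hx).2; simpa using this
  have hSU : ∀ x ∈ S, x ∈ U := by
    intro x hx
    obtain ⟨j, hj⟩ := hSIni x hx
    obtain ⟨u, hu, hu'⟩ := headU j
    rw [hj] at hu'
    exact (Option.some.inj hu').symm ▸ hu
  have hSQ : ∀ x ∈ S, ∃ j, x ∈ Q j := by
    intro x hx
    obtain ⟨j, hj⟩ := hSIni x hx
    exact ⟨j, List.mem_of_mem_head? hj⟩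
  -- the rerouting lemma from minimality of Q
  have reroute : ∀ (j : Fin k) (p : ℕ), p < (Q j).length → ∀ pre : List V,
      (∀ v ∈ pre, ∀ j', v ∉ Q j') → pre.Nodup →
      (pre ++ (Q j).drop p).Chain' G.Adj →
      (∃ u ∈ U, (pre ++ (Q j).drop p).head? = some u) →
      p ≤ pre.length := by
    intro j p hp pre hpreQ hpreNd hchain hhead
    obtain ⟨u, hu, hhead⟩ := hhead
    set R := pre ++ (Q j).drop p with hR
    have hdropne : (Q j).drop p ≠ [] := by
      intro h; rw [List.drop_eq_nil_iff] at h; omega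
    have hlastR : R.getLast? = (Q j).getLast? := by
      rw [hR, List.getLast?_append_of_ne_nil _ hdropne, auxGetLastDrop _ _ hp]
    have hndR : R.Nodup := by
      rw [hR, List.nodup_append]
      refine ⟨hpreNd, (hNodup j).sublist (List.drop_sublist p _), ?_⟩
      intro v hv w hw hvw
      subst hvw
      exact hpreQ _ hv j ((List.drop_sublist p _).mem hw)
    set Q' : Fin k → List V := Function.update Q j R with hQ'
    have hQ'paths : ∀ i, ∃ u ∈ U, ∃ z ∈ Y, G.IsPathFrom (Q' i) u z := by
      intro i
      by_cases hij : i = j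
      · obtain ⟨z, hz, hz'⟩ := lastY j
        refine ⟨u, hu, z, hz, ?_⟩
        rw [hQ', hij, Function.update_self]
        exact ⟨hhead, by rw [hlastR]; exact hz', hchain, hndR⟩
      · rw [hQ', Function.update_of_ne hij]; exact hQpaths i
    have hQ'disj : ∀ i i', i ≠ i' → ∀ v, v ∈ Q' i → v ∉ Q' i' := by
      intro i i' hne v hv hv'
      by_cases hij : i = j <;> by_cases hij' : i' = j
      · exact hne (hij.trans hij'.symm)
      · rw [hQ', hij, Function.update_self] at hv
        rw [hQ', Function.update_of_ne hij'] at hv'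
        rcases List.mem_append.1 hv with h | h
        · exact hpreQ v h i' hv'
        · exact hQdisj j i' (fun h' => hij' h'.symm) v ((List.drop_sublist p _).mem h) hv'
      · rw [hQ', Function.update_of_ne hij] at hv
        rw [hQ', hij', Function.update_self] at hv'
        rcases List.mem_append.1 hv' with h | h
        · exact hpreQ v h i hv
        · exact hQdisj i j hij v hv ((List.drop_sublist p _).mem h)
      · rw [hQ', Function.update_of_ne hij] at hv
        rw [hQ', Function.update_of_ne hij'] at hv'
        exact hQdisj i i' hne v hv hv'
    have hsum := hQmin Q' hQ'paths hQ'disj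
    rw [show (∑ i, (Q' i).length) = ∑ i, (Function.update (fun i => (Q i).length) j R.length) i from by
        apply Finset.sum_congr rfl; intro i _
        by_cases hij : i = j
        · subst hij; rw [hQ', Function.update_self, Function.update_self]
        · rw [hQ', Function.update_of_ne hij, Function.update_of_ne hij],
      Finset.sum_update_of_mem (Finset.mem_univ j)] at hsum
    rw [Finset.sum_eq_add_sum_sdiff_singleton_of_mem (Finset.mem_univ j) (fun i => (Q i).length)] at hsum
    have hRlen : R.length = pre.length + ((Q j).length - p) := by
      rw [hR, List.length_append, List.length_drop]
    omega
  -- U-vertices not initial on Q avoid Q entirely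
  have zQ : ∀ z, z ∈ U → z ∉ Digr.IniSet Q → ∀ j, z ∉ Q j := by
    intro z hzU hzI j hzQ
    obtain ⟨p, hp, rfl⟩ := List.mem_iff_getElem.1 hzQ
    have h0 := reroute j p hp [] (by simp) (by simp)
      (by rw [List.nil_append]; exact (hChain j).suffix (List.drop_suffix p _))
      ⟨(Q j)[p], hzU, by rw [List.nil_append, List.head?_drop]; simp⟩
    simp only [List.length_nil, Nat.le_zero] at h0
    subst h0
    exact hzI ⟨j, by rw [List.head?_eq_getElem?]; simp [List.getElem?_eq_getElem hp]⟩
  -- the finsets of early vertices of the paths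
  set T1 : Finset V := Finset.univ.biUnion (fun j => (((Q j).drop 1).take 1).toFinset) with hT1
  set T3 : Finset V := Finset.univ.biUnion (fun j => ((Q j).take 3).toFinset) with hT3
  have hT1card : T1.card ≤ k := by
    refine Finset.card_biUnion_le.trans ?_
    calc (∑ _j : Fin k, (((Q _j).drop 1).take 1).toFinset.card) ≤ ∑ _j : Fin k, 1 := by
          refine Finset.sum_le_sum fun j _ => ?_
          exact (List.toFinset_card_le _).trans (by rw [List.length_take]; omega)
      _ = k := by simp
  have hT3card : T3.card ≤ 3 * k := by
    refine Finset.card_biUnion_le.trans ?_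
    calc (∑ _j : Fin k, ((Q _j).take 3).toFinset.card) ≤ ∑ _j : Fin k, 3 := by
          refine Finset.sum_le_sum fun j _ => ?_
          exact (List.toFinset_card_le _).trans (by rw [List.length_take]; omega)
      _ = 3 * k := by simp [mul_comm]
  -- a vertex with an in-dominator that lies on Q must be the second vertex of a path
  have bposT1 : ∀ b z, z ∈ U → z ∉ Digr.IniSet Q → G.Adj z b → b ∉ U →
      ∀ j, b ∈ Q j → b ∈ T1 := by
    intro b z hzU hzI hzb hbU j hbQ
    obtain ⟨p, hp, rfl⟩ := List.mem_iff_getElem.1 hbQ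
    have hhd : ((Q j).drop p).head? = some ((Q j)[p]) := by
      rw [List.head?_drop]; simp [List.getElem?_eq_getElem hp]
    have h1 := reroute j p hp [z] (by intro v hv j'; simp at hv; subst hv; exact zQ _ hzU hzI j')
      (List.nodup_singleton z)
      (by
        rw [List.singleton_append]
        refine List.isChain_cons.2 ⟨?_, (hChain j).suffix (List.drop_suffix p _)⟩
        intro y hy
        rw [hhd] at hy
        exact (Option.some.inj hy).symm ▸ hzb)
      ⟨z, hzU, by rw [List.singleton_append, List.head?_cons]⟩
    simp only [List.length_singleton] at h1
    have hp1 : p = 1 := by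
      rcases Nat.lt_or_ge 0 p with h0 | h0
      · omega
      · exfalso
        have h0' : p = 0 := by omega
        subst h0'
        obtain ⟨u, hu, hu'⟩ := headU j
        rw [List.head?_eq_getElem?, List.getElem?_eq_getElem hp] at hu'
        exact hbU ((Option.some.inj hu').symm ▸ hu)
    subst hp1
    refine Finset.mem_biUnion.2 ⟨j, Finset.mem_univ j, List.mem_toFinset.2 ?_⟩
    rw [auxMemTakeOne, List.head?_drop]
    simp [List.getElem?_eq_getElem hp]
  -- a vertex on Q receiving an arc from such a b must be among the first three
  have mposT3 : ∀ b z mm, z ∈ U → z ∉ Digr.IniSet Q → G.Adj z b → b ∉ U →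
      (∀ j, b ∉ Q j) → G.Adj b mm → ∀ j, mm ∈ Q j → mm ∈ T3 := by
    intro b z mm hzU hzI hzb hbU hbQ hbm j hmQ
    obtain ⟨p, hp, rfl⟩ := List.mem_iff_getElem.1 hmQ
    have hhd : ((Q j).drop p).head? = some ((Q j)[p]) := by
      rw [List.head?_drop]; simp [List.getElem?_eq_getElem hp]
    have hzb' : z ≠ b := fun h => hbU (h ▸ hzU)
    have h2 := reroute j p hp [z, b]
      (by
        intro v hv j'
        rcases List.mem_pair.1 hv with rfl | rfl
        · exact zQ v hzU hzI j'
        · exact hbQ j')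
      (by simp [hzb'])
      (by
        rw [List.cons_append, List.singleton_append]
        refine List.isChain_cons_cons.2 ⟨hzb, ?_⟩
        refine List.isChain_cons.2 ⟨?_, (hChain j).suffix (List.drop_suffix p _)⟩
        intro y hy
        rw [hhd] at hy
        exact (Option.some.inj hy).symm ▸ hbm)
      ⟨z, hzU, by rw [List.cons_append, List.head?_cons]⟩
    simp only [List.length_cons, List.length_singleton, List.length_nil] at h2
    refine Finset.mem_biUnion.2 ⟨j, Finset.mem_univ j, List.mem_toFinset.2 ?_⟩
    exact auxMemTake (by omega) hp
  -- the finset of vertices that are not c-good for u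
  set BG : ℕ → V → Finset V := fun c u => Finset.univ.filter
      (fun v => v ∉ X ∪ Y ∧ v ∉ U ∧ ¬ G.CGoodOn ((↑(X ∪ Y) : Set V))ᶜ c v u) with hBG
  have hBGcard : ∀ c u, u ∈ U → (BG c u).card ≤ 2 * c := by
    intro c u hu
    have h := hUdom u hu c
    have hset : {v : V | v ∉ X ∪ Y ∧ v ∉ U ∧ ¬ G.CGoodOn ((↑(X ∪ Y) : Set V))ᶜ c v u}
        = ↑(BG c u) := by
      ext v; simp [hBG]
    rwa [hset, Set.ncard_coe_finset] at h
  have hBGmem : ∀ c u v, v ∉ X ∪ Y → v ∉ U → v ∉ BG c u →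
      G.CGoodOn ((↑(X ∪ Y) : Set V))ᶜ c v u := by
    intro c u v hXY hU hv
    by_contra hg
    exact hv (Finset.mem_filter.2 ⟨Finset.mem_univ v, hXY, hU, hg⟩)
  -- Phase 1: choose the b's
  have phase1 : ∃ b : ℕ → V, ∀ i, i < m →
      (G.Adj (aN i) (b i) ∧ (b i ∉ X ∪ Y ∪ U) ∧
       (∃ z ∈ U, z ∉ Digr.IniSet Q ∧ G.Adj z (b i)) ∧
       G.CGoodOn ((↑(X ∪ Y) : Set V))ᶜ (C - i) (b i) (sN i) ∧
       b i ∉ T1 ∧ b i ∉ W ∧ b i ∉ A.erase (aN i) ∧ (∀ j, j < i → b i ≠ b j)) := by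
    suffices h : ∀ n, n ≤ m → ∃ b : ℕ → V, ∀ i, i < n →
        (G.Adj (aN i) (b i) ∧ (b i ∉ X ∪ Y ∪ U) ∧
         (∃ z ∈ U, z ∉ Digr.IniSet Q ∧ G.Adj z (b i)) ∧
         G.CGoodOn ((↑(X ∪ Y) : Set V))ᶜ (C - i) (b i) (sN i) ∧
         b i ∉ T1 ∧ b i ∉ W ∧ b i ∉ A.erase (aN i) ∧ (∀ j, j < i → b i ≠ b j)) by
      obtain ⟨b, hb⟩ := h m le_rfl
      exact ⟨b, hb⟩
    intro n
    induction n with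
    | zero => exact fun _ => ⟨fun _ => a₀, fun i hi => absurd hi (by omega)⟩
    | succ n ih =>
      intro hn1
      obtain ⟨b, hb⟩ := ih (by omega)
      have hnm : n < m := by omega
      obtain ⟨B, hBcard, hBmem⟩ := hAdeg (aN n) (haNA n hnm)
      set bad : Finset V := BG (C - n) (sN n) ∪ T1 ∪ W ∪ A.erase (aN n) ∪
        (Finset.range n).image b with hbad
      have hbadcard : bad.card < B.card := by
        have h1 : bad.card ≤ 2 * (C - n) + k + W.card + (m - 1) + n := by
          calc bad.card ≤ (BG (C - n) (sN n) ∪ T1 ∪ W ∪ A.erase (aN n)).card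
              + ((Finset.range n).image b).card := Finset.card_union_le _ _
            _ ≤ ((BG (C - n) (sN n) ∪ T1 ∪ W).card + (A.erase (aN n)).card)
              + ((Finset.range n).image b).card := by
                gcongr; exact Finset.card_union_le _ _
            _ ≤ (((BG (C - n) (sN n) ∪ T1).card + W.card) + (A.erase (aN n)).card)
              + ((Finset.range n).image b).card := by
                gcongr; exact Finset.card_union_le _ _
            _ ≤ ((((BG (C - n) (sN n)).card + T1.card) + W.card) + (A.erase (aN n)).card)
              + ((Finset.range n).image b).card := by
                gcongr; exact Finset.card_union_le _ _
            _ ≤ 2 * (C - n) + k + W.card + (m - 1) + n := by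
                have e1 := hBGcard (C - n) (sN n) (hSU _ (hsNS n hnm))
                have e2 : (A.erase (aN n)).card = m - 1 :=
                  Finset.card_erase_of_mem (haNA n hnm)
                have e3 : ((Finset.range n).image b).card ≤ n :=
                  (Finset.card_image_le).trans (by simp)
                omega
        omega
      obtain ⟨v, hvB, hvbad⟩ := auxPick hbadcard
      obtain ⟨hv1, hv2, hv3⟩ := hBmem v hvB
      simp only [hbad, Finset.mem_union, not_or] at hvbad
      obtain ⟨⟨⟨⟨hvBG, hvT1⟩, hvW⟩, hvA⟩, hvprev⟩ := hvbad
      refine ⟨Function.update b n v, ?_⟩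
      intro i hi
      rcases Nat.lt_or_ge i n with hin | hin
      · have hine : i ≠ n := by omega
        rw [Function.update_of_ne hine]
        obtain ⟨p1, p2, p3, p4, p5, p6, p7, p8⟩ := hb i hin
        refine ⟨p1, p2, p3, p4, p5, p6, p7, fun j hj => ?_⟩
        rw [Function.update_of_ne (by omega : j ≠ n)]
        exact p8 j hj
      · have hieq : i = n := by omega
        subst hieq
        rw [Function.update_self]
        have hvXY : v ∉ X ∪ Y := fun h => hv2 (by simp only [Finset.mem_union] at h ⊢; tauto)
        have hvU : v ∉ U := fun h => hv2 (by simp [h])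
        refine ⟨hv1, hv2, hv3, hBGmem _ _ _ hvXY hvU hvBG, hvT1, hvW, hvA, ?_⟩
        intro j hj
        rw [Function.update_of_ne (by omega : j ≠ i)]
        intro hvj
        exact hvprev (Finset.mem_image.2 ⟨j, Finset.mem_range.2 hj, hvj.symm⟩)
  obtain ⟨b, hb⟩ := phase1
  -- Phase 2: choose the midpoints, in reverse order
  have phase2 : ∃ md : ℕ → V, ∀ i, i < m →
      ((md i = b i ∧ G.Adj (b i) (sN i)) ∨
       (G.Adj (b i) (md i) ∧ G.Adj (md i) (sN i) ∧ md i ∉ X ∪ Y ∧ md i ∉ T3 ∧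
        md i ∉ W ∧ md i ∉ A ∧ (∀ j, j < m → j ≠ i → md i ≠ b j) ∧
        (∀ j, i < j → j < m → md i ≠ md j))) := by
    suffices h : ∀ d, d ≤ m → ∃ md : ℕ → V, ∀ i, m - d ≤ i → i < m →
        ((md i = b i ∧ G.Adj (b i) (sN i)) ∨
         (G.Adj (b i) (md i) ∧ G.Adj (md i) (sN i) ∧ md i ∉ X ∪ Y ∧ md i ∉ T3 ∧
          md i ∉ W ∧ md i ∉ A ∧ (∀ j, j < m → j ≠ i → md i ≠ b j) ∧
          (∀ j, i < j → j < m → md i ≠ md j))) by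
      obtain ⟨md, hmd⟩ := h m le_rfl
      exact ⟨md, fun i hi => hmd i (by omega) hi⟩
    intro d
    induction d with
    | zero => exact fun _ => ⟨fun _ => a₀, fun i hi hi' => absurd hi (by omega)⟩
    | succ d ih =>
      intro hd1
      obtain ⟨md, hmd⟩ := ih (by omega)
      set n := m - (d + 1) with hn
      have hnm : n < m := by omega
      have hnd : m - d = n + 1 := by omega
      by_cases harc : G.Adj (b n) (sN n)
      · refine ⟨Function.update md n (b n), ?_⟩
        intro i hi hi'
        rcases Nat.lt_or_ge n i with hin | hin
        · have hine : i ≠ n := by omega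
          rw [Function.update_of_ne hine]
          rcases hmd i (by omega) hi' with h | ⟨q1, q2, q3, q4, q5, q6, q7, q8⟩
          · exact Or.inl h
          · refine Or.inr ⟨q1, q2, q3, q4, q5, q6, q7, fun j hj hj' => ?_⟩
            rw [Function.update_of_ne (by omega : j ≠ n)]
            exact q8 j hj hj'
        · have hieq : i = n := by omega
          subst hieq
          rw [Function.update_self]
          exact Or.inl ⟨rfl, harc⟩
      · obtain ⟨p1, p2, p3, p4, p5, p6, p7, p8⟩ := hb n hnm
        rcases p4 with harc' | ⟨M, hMcard, hMmem⟩
        · exact absurd harc' harc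
        set bad : Finset V := T3 ∪ W ∪ A ∪ (Finset.range m).image b ∪
          (Finset.Ico (n + 1) m).image md with hbad
        have hbadcard : bad.card < M.card := by
          have h1 : bad.card ≤ 3 * k + W.card + m + m + (m - (n + 1)) := by
            calc bad.card ≤ (T3 ∪ W ∪ A ∪ (Finset.range m).image b).card
                + ((Finset.Ico (n + 1) m).image md).card := Finset.card_union_le _ _
              _ ≤ ((T3 ∪ W ∪ A).card + ((Finset.range m).image b).card)
                + ((Finset.Ico (n + 1) m).image md).card := by
                  gcongr; exact Finset.card_union_le _ _
              _ ≤ (((T3 ∪ W).card + A.card) + ((Finset.range m).image b).card)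
                + ((Finset.Ico (n + 1) m).image md).card := by
                  gcongr; exact Finset.card_union_le _ _
              _ ≤ ((((T3.card + W.card) + A.card) + ((Finset.range m).image b).card)
                + ((Finset.Ico (n + 1) m).image md).card) := by
                  gcongr; exact Finset.card_union_le _ _
              _ ≤ 3 * k + W.card + m + m + (m - (n + 1)) := by
                  have e3 : ((Finset.range m).image b).card ≤ m :=
                    (Finset.card_image_le).trans (by simp)
                  have e4 : ((Finset.Ico (n + 1) m).image md).card ≤ m - (n + 1) :=
                    (Finset.card_image_le).trans (by simp)
                  omega
          omega
        obtain ⟨v, hvM, hvbad⟩ := auxPick hbadcard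
        obtain ⟨hvXY, hvb, hvs⟩ := hMmem v hvM
        simp only [hbad, Finset.mem_union, not_or] at hvbad
        obtain ⟨⟨⟨⟨hvT3, hvW⟩, hvA⟩, hvball⟩, hvmd⟩ := hvbad
        have hvXY' : v ∉ X ∪ Y := by
          intro h
          exact hvXY (by simpa using h)
        refine ⟨Function.update md n v, ?_⟩
        intro i hi hi'
        rcases Nat.lt_or_ge n i with hin | hin
        · have hine : i ≠ n := by omega
          rw [Function.update_of_ne hine]
          rcases hmd i (by omega) hi' with h | ⟨q1, q2, q3, q4, q5, q6, q7, q8⟩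
          · exact Or.inl h
          · refine Or.inr ⟨q1, q2, q3, q4, q5, q6, q7, fun j hj hj' => ?_⟩
            rw [Function.update_of_ne (by omega : j ≠ n)]
            exact q8 j hj hj'
        · have hieq : i = n := by omega
          subst hieq
          rw [Function.update_self]
          refine Or.inr ⟨hvb, hvs, hvXY', hvT3, hvW, hvA, ?_, ?_⟩
          · intro j hj _ hvj
            exact hvball (Finset.mem_image.2 ⟨j, Finset.mem_range.2 hj, hvj.symm⟩)
          · intro j hj hj'
            rw [Function.update_of_ne (by omega : j ≠ n)]
            intro hvj
            exact hvmd (Finset.mem_image.2 ⟨j, Finset.mem_Ico.2 ⟨by omega, hj'⟩, hvj.symm⟩)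
  obtain ⟨md, hmd⟩ := phase2
  -- packaged facts about the chosen b's and midpoints
  have hbpack : ∀ i, i < m → (∀ j, b i ∉ Q j) ∧ b i ∉ A ∧ b i ∉ W ∧ b i ∉ X ∧
      b i ∉ U ∧ b i ≠ aN i := by
    intro i hi
    obtain ⟨p1, p2, p3, p4, p5, p6, p7, p8⟩ := hb i hi
    obtain ⟨z, hzU, hzI, hzb⟩ := p3
    have hbU : b i ∉ U := fun h => p2 (by simp [h])
    have hbX : b i ∉ X := fun h => p2 (by simp [h])
    have hbQ : ∀ j, b i ∉ Q j := fun j hbq => p5 (bposT1 (b i) z hzU hzI hzb hbU j hbq)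
    have hbaN : b i ≠ aN i := fun h => G.irrefl _ (h ▸ p1)
    have hbA : b i ∉ A := fun h => p7 (Finset.mem_erase.2 ⟨hbaN, h⟩)
    exact ⟨hbQ, hbA, p6, hbX, hbU, hbaN⟩
  have hmdpack : ∀ i, i < m → ¬ G.Adj (b i) (sN i) →
      (∀ j, md i ∉ Q j) ∧ md i ∉ A ∧ md i ∉ W ∧ md i ∉ X ∧
      G.Adj (b i) (md i) ∧ G.Adj (md i) (sN i) ∧
      (∀ j, j < m → j ≠ i → md i ≠ b j) ∧ (∀ j, i < j → j < m → md i ≠ md j) := by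
    intro i hi harc
    rcases hmd i hi with ⟨_, h⟩ | ⟨q1, q2, q3, q4, q5, q6, q7, q8⟩
    · exact absurd h harc
    obtain ⟨p1, p2, p3, p4, p5, p6, p7, p8⟩ := hb i hi
    obtain ⟨z, hzU, hzI, hzb⟩ := p3
    have hbU : b i ∉ U := fun h => p2 (by simp [h])
    have hbQ : ∀ j, b i ∉ Q j := fun j hbq => p5 (bposT1 (b i) z hzU hzI hzb hbU j hbq)
    have hmQ : ∀ j, md i ∉ Q j := fun j hmq =>
      q4 (mposT3 (b i) z (md i) hzU hzI hzb hbU hbQ q1 j hmq)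
    have hmX : md i ∉ X := fun h => q3 (by simp [h])
    exact ⟨hmQ, q6, q5, hmX, q1, q2, q7, q8⟩
  -- key pairwise disjointness at the index level
  have keydisj : ∀ i j, i < m → j < m → i ≠ j → ∀ v,
      (v = aN i ∨ v = b i ∨ (¬G.Adj (b i) (sN i) ∧ v = md i) ∨ v = sN i) →
      (v = aN j ∨ v = b j ∨ (¬G.Adj (b j) (sN j) ∧ v = md j) ∨ v = sN j) → False := by
    intro i j hi hj hij v hvi hvj
    obtain ⟨biQ, biA, biW, biX, biU, binA⟩ := hbpack i hi
    obtain ⟨bjQ, bjA, bjW, bjX, bjU, bjnA⟩ := hbpack j hj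
    have hAI : ∀ l, l < m → aN l ∉ Digr.IniSet Q := fun l hl => (hAsub (aN l) (haNA l hl)).2
    have hSI : ∀ l, l < m → sN l ∈ Digr.IniSet Q := fun l hl => hSIni _ (hsNS l hl)
    have hSQ' : ∀ l, l < m → ∃ j', sN l ∈ Q j' := fun l hl => hSQ _ (hsNS l hl)
    rcases hvi with rfl | rfl | ⟨harci, rfl⟩ | rfl <;>
      rcases hvj with h | h | ⟨harcj, h⟩ | h
    · exact hij (haNinj i j hi hj h)
    · exact bjA (h ▸ haNA i hi)
    · exact (hmdpack j hj harcj).2.1 (h ▸ haNA i hi)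
    · exact hAI i hi (h ▸ hSI j hj)
    · exact biA (h.symm ▸ haNA j hj)
    · rcases Nat.lt_or_ge i j with hlt | hge
      · exact (hb j hj).2.2.2.2.2.2.2 i hlt h.symm
      · exact (hb i hi).2.2.2.2.2.2.2 j (by omega) h
    · exact (hmdpack j hj harcj).2.2.2.2.2.2.1 i hi (fun hh => hij hh) h.symm
    · obtain ⟨j', hj'⟩ := hSQ' j hj
      exact biQ j' (h ▸ hj')
    · exact (hmdpack i hi harci).2.1 (h ▸ haNA j hj)
    · exact (hmdpack i hi harci).2.2.2.2.2.2.1 j hj (fun hh => hij hh.symm) h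
    · rcases Nat.lt_or_ge i j with hlt | hge
      · exact (hmdpack i hi harci).2.2.2.2.2.2.2 j hlt hj h
      · exact (hmdpack j hj harcj).2.2.2.2.2.2.2 i (by omega) hi h.symm
    · obtain ⟨j', hj'⟩ := hSQ' j hj
      exact (hmdpack i hi harci).1 j' (h ▸ hj')
    · exact hAI j hj (h ▸ hSI i hi)
    · obtain ⟨j', hj'⟩ := hSQ' i hi
      exact bjQ j' (h ▸ hj')
    · obtain ⟨j', hj'⟩ := hSQ' i hi
      exact (hmdpack j hj harcj).1 j' (h ▸ hj')
    · exact hij (hsNinj i j hi hj h)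
  -- membership of the four kinds of vertices in the ambient set
  have hmemT_A : ∀ x ∈ A, (x : V) ∈ ((Set.univ \ (Digr.VSet Q ∪ ↑W ∪ ↑X)) ∪ (↑S ∪ ↑A)) :=
    fun x hx => Or.inr (Or.inr (by simpa using hx))
  have hmemT_S : ∀ x ∈ S, (x : V) ∈ ((Set.univ \ (Digr.VSet Q ∪ ↑W ∪ ↑X)) ∪ (↑S ∪ ↑A)) :=
    fun x hx => Or.inr (Or.inl (by simpa using hx))
  have hmemT_free : ∀ v : V, (∀ j, v ∉ Q j) → v ∉ W → v ∉ X →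
      v ∈ ((Set.univ \ (Digr.VSet Q ∪ ↑W ∪ ↑X)) ∪ (↑S ∪ ↑A)) := by
    intro v h1 h2 h3
    left
    refine ⟨trivial, ?_⟩
    intro h
    rcases h with (h | h) | h
    · obtain ⟨j, hj⟩ := h; exact h1 j hj
    · exact h2 (by simpa using h)
    · exact h3 (by simpa using h)
  -- identification of endpoints
  have hidx : ∀ x : {x // x ∈ A}, aN (σ x).val = (x : V) ∧ sN (σ x).val = ((e x : {y // y ∈ S}) : V) := by
    intro x
    have hlt : ((σ x) : Fin A.card).val < m := (σ x).isLt
    constructor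
    · simp only [haN, dif_pos hlt]
      congr 1
      rw [show (⟨(σ x).val, hlt⟩ : Fin A.card) = σ x from Fin.eta _ _]
      exact σ.symm_apply_apply x
    · simp only [hsN, dif_pos hlt]
      congr 2
      rw [show (⟨(σ x).val, hlt⟩ : Fin A.card) = σ x from Fin.eta _ _]
      exact σ.symm_apply_apply x
  -- choose the actual path lists, avoiding `if` in the goal
  have hpath : ∀ i : ℕ, ∃ l : List V,
      (G.Adj (b i) (sN i) → l = [aN i, b i, sN i]) ∧
      (¬ G.Adj (b i) (sN i) → l = [aN i, b i, md i, sN i]) := by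
    intro i
    by_cases harc : G.Adj (b i) (sN i)
    · exact ⟨[aN i, b i, sN i], fun _ => rfl, fun h => absurd harc h⟩
    · exact ⟨[aN i, b i, md i, sN i], fun h => absurd h harc, fun _ => rfl⟩
  choose L hL1 hL2 using hpath
  -- construction of the paths
  refine ⟨fun x => L (σ x).val, ?_, ?_⟩
  · intro x
    dsimp only
    obtain ⟨hax, hsx⟩ := hidx x
    have hi : (σ x).val < m := (σ x).isLt
    obtain ⟨biQ, biA, biW, biX, biU, binA⟩ := hbpack _ hi
    have hxA : aN (σ x).val ∈ A := haNA _ hi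
    have hsS : sN (σ x).val ∈ S := hsNS _ hi
    have hadj1 : G.Adj (aN (σ x).val) (b (σ x).val) := (hb _ hi).1
    have hxb : aN (σ x).val ≠ b (σ x).val := fun h => binA h.symm
    have hxs : aN (σ x).val ≠ sN (σ x).val := by
      intro h
      exact (hAsub _ hxA).2 (h ▸ hSIni _ hsS)
    have hbs : b (σ x).val ≠ sN (σ x).val := by
      intro h
      obtain ⟨j', hj'⟩ := hSQ _ hsS
      exact biQ j' (h ▸ hj')
    rw [← hsx, ← hax]
    by_cases harc : G.Adj (b (σ x).val) (sN (σ x).val)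
    · rw [hL1 _ harc]
      refine ⟨⟨⟨rfl, by simp, ?_, ?_⟩, ?_⟩, by simp⟩
      · exact List.isChain_cons_cons.2 ⟨hadj1, List.isChain_cons_cons.2 ⟨harc, List.isChain_singleton _⟩⟩
      · simp [List.nodup_cons, hxb, hxs, hbs]
      · intro v hv
        simp only [List.mem_cons, List.not_mem_nil, or_false] at hv
        rcases hv with rfl | rfl | rfl
        · exact hmemT_A _ hxA
        · exact hmemT_free _ biQ biW biX
        · exact hmemT_S _ hsS
    · rw [hL2 _ harc]
      obtain ⟨miQ, miA, miW, miX, mAdj1, mAdj2, mq7, mq8⟩ := hmdpack _ hi harc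
      have hxm : aN (σ x).val ≠ md (σ x).val := fun h => miA (h ▸ hxA)
      have hbm : b (σ x).val ≠ md (σ x).val := fun h => G.irrefl _ (h ▸ mAdj1)
      have hms : md (σ x).val ≠ sN (σ x).val := fun h => G.irrefl _ (h ▸ mAdj2)
      refine ⟨⟨⟨rfl, by simp, ?_, ?_⟩, ?_⟩, by simp⟩
      · exact List.isChain_cons_cons.2 ⟨hadj1, List.isChain_cons_cons.2 ⟨mAdj1,
          List.isChain_cons_cons.2 ⟨mAdj2, List.isChain_singleton _⟩⟩⟩
      · simp [List.nodup_cons, hxb, hxm, hxs, hbm, hbs, hms]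
      · intro v hv
        simp only [List.mem_cons, List.not_mem_nil, or_false] at hv
        rcases hv with rfl | rfl | rfl | rfl
        · exact hmemT_A _ hxA
        · exact hmemT_free _ biQ biW biX
        · exact hmemT_free _ miQ miW miX
        · exact hmemT_S _ hsS
  · intro x y hxy v hvx hvy
    dsimp only at hvx hvy
    have hij : (σ x).val ≠ (σ y).val := fun h => hxy (σ.injective (Fin.val_inj.1 h))
    have hvx' : v = aN (σ x).val ∨ v = b (σ x).val ∨
        (¬G.Adj (b (σ x).val) (sN (σ x).val) ∧ v = md (σ x).val) ∨ v = sN (σ x).val := by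
      by_cases harc : G.Adj (b (σ x).val) (sN (σ x).val)
      · rw [hL1 _ harc] at hvx
        simp only [List.mem_cons, List.not_mem_nil, or_false] at hvx
        rcases hvx with rfl | rfl | rfl
        · exact Or.inl rfl
        · exact Or.inr (Or.inl rfl)
        · exact Or.inr (Or.inr (Or.inr rfl))
      · rw [hL2 _ harc] at hvx
        simp only [List.mem_cons, List.not_mem_nil, or_false] at hvx
        rcases hvx with rfl | rfl | rfl | rfl
        · exact Or.inl rfl
        · exact Or.inr (Or.inl rfl)
        · exact Or.inr (Or.inr (Or.inl ⟨harc, rfl⟩))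
        · exact Or.inr (Or.inr (Or.inr rfl))
    have hvy' : v = aN (σ y).val ∨ v = b (σ y).val ∨
        (¬G.Adj (b (σ y).val) (sN (σ y).val) ∧ v = md (σ y).val) ∨ v = sN (σ y).val := by
      by_cases harc : G.Adj (b (σ y).val) (sN (σ y).val)
      · rw [hL1 _ harc] at hvy
        simp only [List.mem_cons, List.not_mem_nil, or_false] at hvy
        rcases hvy with rfl | rfl | rfl
        · exact Or.inl rfl
        · exact Or.inr (Or.inl rfl)
        · exact Or.inr (Or.inr (Or.inr rfl))
      · rw [hL2 _ harc] at hvy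
        simp only [List.mem_cons, List.not_mem_nil, or_false] at hvy
        rcases hvy with rfl | rfl | rfl | rfl
        · exact Or.inl rfl
        · exact Or.inr (Or.inl rfl)
        · exact Or.inr (Or.inr (Or.inl ⟨harc, rfl⟩))
        · exact Or.inr (Or.inr (Or.inr rfl))
    exact keydisj _ _ (σ x).isLt (σ y).isLt hij v hvx' hvy'
end

section
/- Let l be an integer with l ≥ 2. Suppose D is an l-quasi-transitive digraph containing a directed (u, v)-path for vertices u, v. If the distance d(u, v) from u to v satisfies d(u, v) ≥ l, then d(v, u) ≤ l + 1. -/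
namespace Digr

/-- An l-quasi-transitive digraph: whenever there is a path of length l (i.e. with
l arcs, hence l+1 vertices) from u to v, the vertices u and v are adjacent. -/
def LQuasiTransitive {V : Type} (G : Digr V) (l : ℕ) : Prop :=
  ∀ u v : V, (∃ p : List V, G.IsPathFrom p u v ∧ p.length = l + 1) →
    (G.Adj u v ∨ G.Adj v u)

end Digr

namespace LQT13

lemma chain'_range' {R : ℕ → ℕ → Prop} :
    ∀ (k s : ℕ), (∀ i, s ≤ i → i + 1 < s + k → R i (i+1)) →
    (List.range' s k).Chain' R := by
  intro k
  induction k with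
  | zero => intro s _; simp [List.Chain']
  | succ k ih =>
    intro s h
    cases k with
    | zero => simp [List.range'_succ, List.Chain']
    | succ k' =>
      rw [List.range'_succ, List.range'_succ, List.Chain', List.isChain_cons_cons]
      constructor
      · exact h s le_rfl (by omega)
      · rw [← List.range'_succ]
        exact ih (s+1) (fun i hi hlt => h i (by omega) (by omega))

lemma isPathFrom_map {V : Type} (G : Digr V) (x : ℕ → V) (n : ℕ)
    (hinj : ∀ i ≤ n, ∀ j ≤ n, x i = x j → i = j)
    (I : List ℕ) (a b : ℕ)
    (hmem : ∀ i ∈ I, i ≤ n)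
    (hh : I.head? = some a) (hlast : I.getLast? = some b)
    (hc : I.Chain' (fun i j => G.Adj (x i) (x j)))
    (hnd : I.Nodup) :
    G.IsPathFrom (I.map x) (x a) (x b) := by
  refine ⟨?_, ?_, ?_, ?_⟩
  · rw [List.head?_map, hh]; rfl
  · rw [List.getLast?_map, hlast]; rfl
  · rw [List.Chain', List.isChain_map]; exact hc
  · exact hnd.map_on (fun i hi j hj hij => hinj i (hmem i hi) j (hmem j hj) hij)

lemma hr_head (s k : ℕ) : (List.range' s (k+1)).head? = some s := by
  rw [List.range'_succ]; rfl

lemma hr_last (s k : ℕ) : (List.range' s (k+1)).getLast? = some (s+k) := by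
  rw [List.range'_concat, List.getLast?_concat, one_mul]

lemma hhead_append (s k : ℕ) (C : List ℕ) :
    (List.range' s (k+1) ++ C).head? = some s := by
  rw [List.range'_succ]; rfl

lemma hlast_append (A : List ℕ) (s k : ℕ) :
    (A ++ List.range' s (k+1)).getLast? = some (s+k) := by
  rw [List.range'_concat, ← List.append_assoc, List.getLast?_concat, one_mul]

end LQT13

/-- In an l-quasi-transitive digraph (l ≥ 2), if there is a
(u,v)-path and d(u,v) ≥ l (every (u,v)-path has at least l arcs, i.e. at least
l+1 vertices), then d(v,u) ≤ l+1 (there is a (v,u)-path with at most l+1 arcs,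
i.e. at most l+2 vertices). -/
theorem l_quasi_transitive_distance {V : Type} (l : ℕ) (hl : 2 ≤ l)
    (G : Digr V) (hqt : G.LQuasiTransitive l) (u v : V)
    (hpath : ∃ p : List V, G.IsPathFrom p u v)
    (hdist : ∀ p : List V, G.IsPathFrom p u v → l + 1 ≤ p.length) :
    ∃ p : List V, G.IsPathFrom p v u ∧ p.length ≤ l + 2 := by
  classical
  open LQT13 in
  have hex : ∃ N, ∃ p : List V, G.IsPathFrom p u v ∧ p.length = N := by
    obtain ⟨p, hp⟩ := hpath; exact ⟨p.length, p, hp, rfl⟩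
  obtain ⟨p, hp, hplen⟩ := Nat.find_spec hex
  have hmin : ∀ q : List V, G.IsPathFrom q u v → Nat.find hex ≤ q.length :=
    fun q hq => Nat.find_min' hex ⟨q, hq, rfl⟩
  obtain ⟨hhead, hlastp, hchain, hnodup⟩ := hp
  have hpne : p ≠ [] := by intro h; simp [h] at hhead
  set n : ℕ := p.length - 1 with hn
  have hlen : p.length = n + 1 := by
    have : 0 < p.length := List.length_pos_iff.mpr hpne
    omega
  have hnl : l ≤ n := by
    have := hdist p ⟨hhead, hlastp, hchain, hnodup⟩
    omega
  have hNval : Nat.find hex = n + 1 := by omega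
  set x : ℕ → V := fun i => p.getD i v with hx
  have hxval : ∀ i, ∀ (hi : i < p.length), x i = p[i] := by
    intro i hi
    simp [hx, List.getD_eq_getElem?_getD, List.getElem?_eq_getElem hi]
  have hx0 : x 0 = u := by
    rw [List.head?_eq_getElem?] at hhead
    rw [hxval 0 (by omega)]
    have := List.getElem?_eq_getElem (l := p) (i := 0) (by omega)
    rw [this] at hhead
    exact Option.some_injective _ hhead
  have hxn : x n = v := by
    rw [List.getLast?_eq_getElem?, show p.length - 1 = n from by omega] at hlastp
    simp [hx, List.getD_eq_getElem?_getD, hlastp]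
  have hadj : ∀ i, i + 1 ≤ n → G.Adj (x i) (x (i+1)) := by
    intro i hi
    have h1 : i < p.length - 1 := by omega
    have := List.isChain_iff_getElem.mp hchain i (by omega)
    rw [hxval i (by omega), hxval (i+1) (by omega)]
    exact this
  have hinj : ∀ i ≤ n, ∀ j ≤ n, x i = x j → i = j := by
    intro i hi j hj hij
    rw [hxval i (by omega), hxval j (by omega)] at hij
    exact (hnodup.getElem_inj_iff).mp hij
  -- forward chains
  have hr_chain : ∀ s k, s + k ≤ n + 1 →
      (List.range' s k).Chain' (fun i j => G.Adj (x i) (x j)) :=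
    fun s k h => chain'_range' k s (fun i hi hlt => hadj i (by omega))
  -- no short u-v path
  have hnoshort : ∀ I : List ℕ, I.head? = some 0 → I.getLast? = some n →
      I.Chain' (fun i j => G.Adj (x i) (x j)) → I.Nodup → (∀ i ∈ I, i ≤ n) →
      n + 1 ≤ I.length := by
    intro I h1 h2 h3 h4 h5
    have hP := isPathFrom_map G x n hinj I 0 n h5 h1 h2 h3 h4
    rw [hx0, hxn] at hP
    have := hmin (I.map x) hP
    rw [List.length_map] at this
    omega
  -- qt on an index list
  have hqt' : ∀ I : List ℕ, ∀ a b : ℕ, (∀ i ∈ I, i ≤ n) →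
      I.head? = some a → I.getLast? = some b →
      I.Chain' (fun i j => G.Adj (x i) (x j)) → I.Nodup → I.length = l + 1 →
      G.Adj (x a) (x b) ∨ G.Adj (x b) (x a) := by
    intro I a b h5 h1 h2 h3 h4 h6
    exact hqt (x a) (x b) ⟨I.map x, isPathFrom_map G x n hinj I a b h5 h1 h2 h3 h4,
      by rw [List.length_map, h6]⟩
  -- no forward jumps beyond +1
  have hnofwd : ∀ i j, i < j → j ≤ n → G.Adj (x i) (x j) → j ≤ i + 1 := by
    intro i j hij hjn hAdj
    by_contra hcon
    push_neg at hcon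
    set I : List ℕ := List.range' 0 (i+1) ++ List.range' j (n-j+1) with hI
    have hh : I.head? = some 0 := hhead_append 0 i _
    have hlst : I.getLast? = some n := by
      have : n - j + 1 = (n-j) + 1 := rfl
      rw [hI, this, hlast_append]
      congr 1
      omega
    have hc : I.Chain' (fun a b => G.Adj (x a) (x b)) := by
      refine List.IsChain.append (hr_chain 0 (i+1) (by omega))
        (hr_chain j (n-j+1) (by omega)) ?_
      intro a ha b hb
      rw [hr_last 0 i] at ha
      have hb' : (List.range' j (n-j+1)).head? = some j := by
        have : n - j + 1 = (n-j) + 1 := rfl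
        rw [this, hr_head]
      rw [hb'] at hb
      simp only [Option.mem_def, Option.some_inj] at ha hb
      subst ha; subst hb
      simpa using hAdj
    have hnd : I.Nodup := by
      refine List.Nodup.append (List.nodup_range' (s := 0) (n := i+1)) (List.nodup_range' (s := j) (n := n-j+1)) ?_
      intro a ha hb
      rw [List.mem_range'_1] at ha hb
      omega
    have hmem : ∀ a ∈ I, a ≤ n := by
      intro a ha
      rw [hI, List.mem_append, List.mem_range'_1, List.mem_range'_1] at ha
      omega
    have := hnoshort I hh hlst hc hnd hmem
    rw [hI, List.length_append, List.length_range', List.length_range'] at this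
    omega
  -- backward arcs
  have hback : ∀ j, j + l ≤ n → G.Adj (x (j + l)) (x j) := by
    intro j hj
    have hd := hqt' (List.range' j (l+1)) j (j+l)
      (by intro a ha; rw [List.mem_range'_1] at ha; omega)
      (hr_head j l) (hr_last j l) (hr_chain j (l+1) (by omega))
      (List.nodup_range' (s := j) (n := l+1)) (by rw [List.length_range'])
    rcases hd with h | h
    · have := hnofwd j (j+l) (by omega) (by omega) h
      omega
    · exact h
  -- the main induction: v sees x m for all m with m + 2t + l = n
  have hS : ∀ t m, m + 2 * t + l = n → G.Adj v (x m) := by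
    intro t
    induction t with
    | zero =>
      intro m hm
      have hd := hqt' (List.range' m (l+1)) m (m+l)
        (by intro a ha; rw [List.mem_range'_1] at ha; omega)
        (hr_head m l) (hr_last m l) (hr_chain m (l+1) (by omega))
        (List.nodup_range' (s := m) (n := l+1)) (by rw [List.length_range'])
      rcases hd with h | h
      · exfalso
        have := hnofwd m (m+l) (by omega) (by omega) h
        omega
      · rw [show m + l = n by omega, hxn] at h
        exact h
    | succ t ih =>
      intro m hm
      have hm2 : G.Adj v (x (m+2)) := ih (m+2) (by omega)
      have hmn : m + 2 + l ≤ n := by omega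
      -- build an index path of length l+1 from n to m
      obtain ⟨I, hImem, hIh, hIl, hIc, hInd, hIlen⟩ :
          ∃ I : List ℕ, (∀ i ∈ I, i ≤ n) ∧ I.head? = some n ∧
            I.getLast? = some m ∧ I.Chain' (fun i j => G.Adj (x i) (x j)) ∧
            I.Nodup ∧ I.length = l + 1 := by
        by_cases hcase : l ≤ m + 2
        · -- I = n :: [m+2] ++ range' (m+2-l) (l-1)
          obtain ⟨j, hj⟩ : ∃ j, j + l = m + 2 := ⟨m + 2 - l, by omega⟩
          obtain ⟨k, hk⟩ : ∃ k, l = k + 2 := ⟨l - 2, by omega⟩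
          refine ⟨(n :: List.range' (m+2) 1) ++ List.range' j (k+1), ?_, rfl, ?_, ?_, ?_, ?_⟩
          · intro a ha
            simp only [List.mem_append, List.mem_cons, List.mem_range'_1] at ha
            omega
          · rw [hlast_append]
            congr 1
            omega
          · rw [List.cons_append]
            rw [List.Chain', List.isChain_cons]
            constructor
            · intro y hy
              rw [hhead_append] at hy
              simp only [Option.mem_def, Option.some_inj] at hy
              subst hy
              rw [hxn]
              exact hm2
            · refine List.IsChain.append ?_ (hr_chain j (k+1) (by omega)) ?_
              · simp
              · intro a ha b hb
                simp only [List.range'_one, List.getLast?_singleton,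
                  Option.mem_def, Option.some_inj] at ha
                rw [hr_head] at hb
                simp only [Option.mem_def, Option.some_inj] at hb
                subst ha; subst hb
                have := hback j (by omega)
                rwa [hj] at this
          · rw [List.cons_append, List.nodup_cons]
            constructor
            · simp only [List.mem_append, List.mem_range'_1]
              omega
            · refine List.Nodup.append (by simp) (List.nodup_range' (s := j) (n := k+1)) ?_
              intro a ha hb
              simp only [List.range'_one, List.mem_singleton] at ha
              rw [List.mem_range'_1] at hb
              omega
          · simp only [List.cons_append, List.length_cons, List.length_append,
              List.length_range']
            omega
        · -- m + 2 < l : I = n :: range' (m+2) (l-m-1) ++ range' 0 (m+1)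
          obtain ⟨c, hc⟩ : ∃ c, m + 2 + c = l := ⟨l - m - 2, by omega⟩
          refine ⟨(n :: List.range' (m+2) (c+1)) ++ List.range' 0 (m+1), ?_, rfl, ?_, ?_, ?_, ?_⟩
          · intro a ha
            simp only [List.mem_append, List.mem_cons, List.mem_range'_1] at ha
            omega
          · rw [hlast_append, Nat.zero_add]
          · rw [List.cons_append]
            rw [List.Chain', List.isChain_cons]
            constructor
            · intro y hy
              rw [hhead_append] at hy
              simp only [Option.mem_def, Option.some_inj] at hy
              subst hy
              rw [hxn]
              exact hm2
            · refine List.IsChain.append (hr_chain (m+2) (c+1) (by omega))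
                (hr_chain 0 (m+1) (by omega)) ?_
              intro a ha b hb
              rw [hr_last] at ha
              rw [hr_head] at hb
              simp only [Option.mem_def, Option.some_inj] at ha hb
              subst ha; subst hb
              have := hback 0 (by omega)
              rw [zero_add] at this
              rw [show m + 2 + c = l from hc]
              exact this
          · rw [List.cons_append, List.nodup_cons]
            constructor
            · simp only [List.mem_append, List.mem_range'_1]
              omega
            · refine List.Nodup.append (List.nodup_range' (s := m+2) (n := c+1))
                (List.nodup_range' (s := 0) (n := m+1)) ?_
              intro a ha hb
              rw [List.mem_range'_1] at ha hb
              omega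
          · simp only [List.cons_append, List.length_cons, List.length_append,
              List.length_range']
            omega
      have hd := hqt' I n m hImem hIh hIl hIc hInd hIlen
      rcases hd with h | h
      · rw [hxn] at h
        exact h
      · exfalso
        have := hnofwd m n (by omega) (le_refl n) h
        omega
  -- conclude
  obtain ⟨t, r, hr, hnr⟩ : ∃ t r, r ≤ 1 ∧ n = r + 2*t + l :=
    ⟨(n - l)/2, (n - l) % 2, by omega, by omega⟩
  have hvu : v ≠ u := by
    intro h
    have : x n = x 0 := by rw [hxn, hx0, h]
    have := hinj n (le_refl n) 0 (by omega) this
    omega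
  rcases Nat.le_one_iff_eq_zero_or_eq_one.mp hr with h0 | h1
  · subst h0
    have hA : G.Adj v u := by
      have := hS t 0 (by omega)
      rwa [hx0] at this
    refine ⟨[v, u], ⟨rfl, rfl, ?_, ?_⟩, by simp only [List.length_cons, List.length_nil]; omega⟩
    · exact List.isChain_pair.mpr hA
    · simp [hvu]
  · subst h1
    have hA1 : G.Adj v (x 1) := hS t 1 (by omega)
    set J : List ℕ := (n :: List.range' 1 l) ++ List.range' 0 1 with hJ
    have hJmem : ∀ a ∈ J, a ≤ n := by
      intro a ha
      simp only [hJ, List.mem_append, List.mem_cons, List.mem_range'_1] at ha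
      omega
    have hJh : J.head? = some n := rfl
    have hJl : J.getLast? = some 0 := by
      rw [hJ]
      have : (1:ℕ) = 0 + 1 := rfl
      rw [this, hlast_append]
    have hJc : J.Chain' (fun i j => G.Adj (x i) (x j)) := by
      rw [hJ, List.cons_append, List.Chain', List.isChain_cons]
      constructor
      · intro y hy
        obtain ⟨l', hl'⟩ : ∃ l', l = l' + 1 := ⟨l - 1, by omega⟩
        rw [hl', hhead_append] at hy
        simp only [Option.mem_def, Option.some_inj] at hy
        subst hy
        rw [hxn]
        exact hA1
      · refine List.IsChain.append (hr_chain 1 l (by omega)) (by simp) ?_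
        intro a ha b hb
        obtain ⟨l', hl'⟩ : ∃ l', l = l' + 1 := ⟨l - 1, by omega⟩
        rw [hl', hr_last] at ha
        simp only [List.range'_one, List.head?_cons, Option.mem_def, Option.some_inj] at ha hb
        subst ha; subst hb
        have := hback 0 (by omega)
        rw [zero_add] at this
        rw [show 1 + l' = l by omega]
        exact this
    have hJnd : J.Nodup := by
      rw [hJ, List.cons_append, List.nodup_cons]
      constructor
      · simp only [List.mem_append, List.mem_range'_1]
        omega
      · refine List.Nodup.append (List.nodup_range' (s := 1) (n := l)) (List.nodup_range' (s := 0) (n := 1)) ?_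
        intro a ha hb
        rw [List.mem_range'_1] at ha hb
        omega
    have hP := isPathFrom_map G x n hinj J n 0 hJmem hJh hJl hJc hJnd
    rw [hxn, hx0] at hP
    refine ⟨J.map x, hP, ?_⟩
    rw [List.length_map, hJ]
    simp only [List.cons_append, List.length_cons, List.length_append, List.length_range']
    omega
end

section
/- Let l ≥ 2 and f be positive integers, and let D be an l-quasi-transitive digraph that is (2f(l+2)+1)-strong. Then for any two non-adjacent vertices u and v of D, there exist at least f independent paths, each of length at most l + 1, that are all directed from u to v, or at least f independent paths, each of length at most l + 1, that are all directed from v to u. -/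
namespace Digr

/-- A family of paths (with common endpoints) is independent if no path
contains an interior vertex of another. -/
def IndepPaths {V : Type} {n : ℕ} (P : Fin n → List V) : Prop :=
  ∀ i j, i ≠ j → ∀ w ∈ (P i).tail.dropLast, w ∉ P j

end Digr


namespace Digr
variable {V : Type}

lemma head?_range' {a b : ℕ} (h : 0 < b) : (List.range' a b).head? = some a := by
  cases b with
  | zero => omega
  | succ c => rw [List.range'_succ]; rfl

lemma getLast?_range' {a b : ℕ} (h : 0 < b) :
    (List.range' a b).getLast? = some (a + b - 1) := by
  cases b with
  | zero => omega
  | succ c =>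
    rw [List.range'_concat, List.getLast?_concat]
    simp only [Option.some.injEq]; omega

lemma chain'_adj_range' (G : Digr V) (x : ℕ → V) {n : ℕ} (a b : ℕ)
    (hadj : ∀ i < n, G.Adj (x i) (x (i+1))) (hab : a + b ≤ n + 1) :
    (List.range' a b).Chain' fun i j => G.Adj (x i) (x j) := by
  unfold List.Chain'
  rw [List.isChain_iff_getElem]
  intro i hi
  simp only [List.length_range'] at hi
  have e : ∀ (j : ℕ) (hj : j < (List.range' a b).length),
      (List.range' a b)[j]'hj = a + j := by
    intro j hj
    rw [List.getElem_range']
    ring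
  rw [e, e]
  have h2 : a + (i + 1) = (a + i) + 1 := by ring
  rw [h2]
  exact hadj _ (by omega)

lemma isPathOn_map (G : Digr V) {A : Set V} (x : ℕ → V) {n : ℕ}
    (hmem : ∀ i ≤ n, x i ∈ A)
    (hinj : ∀ i ≤ n, ∀ j ≤ n, x i = x j → i = j)
    (s : List ℕ) {a b : ℕ}
    (hbd : ∀ i ∈ s, i ≤ n)
    (hnd : s.Nodup)
    (h1 : s.head? = some a) (h2 : s.getLast? = some b)
    (h3 : s.Chain' fun i j => G.Adj (x i) (x j)) :
    G.IsPathOn A (s.map x) (x a) (x b) := by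
  refine ⟨⟨?_, ?_, ?_, hnd.map_on fun i hi j hj hij => hinj i (hbd i hi) j (hbd j hj) hij⟩, ?_⟩
  · rw [List.head?_map, h1]; rfl
  · rw [List.getLast?_map, h2]; rfl
  · unfold List.Chain'; rw [List.isChain_map]; exact h3
  · intro w hw
    obtain ⟨i, hi, rfl⟩ := List.mem_map.1 hw
    exact hmem i (hbd i hi)

lemma interior_ne (G : Digr V) {p : List V} {a b : V} (hp : G.IsPathFrom p a b)
    {w : V} (hw : w ∈ p.tail.dropLast) : w ≠ a ∧ w ≠ b ∧ w ∈ p := by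
  obtain ⟨h1, h2, _, h4⟩ := hp
  cases p with
  | nil => simp at h1
  | cons c t =>
    have hca : c = a := by simpa using h1
    subst hca
    simp only [List.tail_cons] at hw
    have hwt : w ∈ t := List.dropLast_subset t hw
    have htne : t ≠ [] := by rintro rfl; simp at hw
    have hbl : b = t.getLast htne := by
      rw [List.getLast?_eq_getLast (l := c :: t) (by simp)] at h2
      have h2' := Option.some_inj.1 h2
      rw [← h2', List.getLast_cons htne]
    have hnd := (List.nodup_cons.1 h4)
    constructor
    · rintro rfl; exact hnd.1 hwt
    constructor
    · rintro rfl
      have heq := List.dropLast_append_getLast htne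
      have hnd2 : (t.dropLast ++ [t.getLast htne]).Nodup := by rw [heq]; exact hnd.2
      exact (List.nodup_append.1 hnd2).2.2 _ hw _ (by rw [← hbl]; simp) rfl
    · exact List.mem_cons_of_mem _ hwt

lemma mem_path_cases (G : Digr V) {p : List V} {a b : V} (hp : G.IsPathFrom p a b)
    {w : V} (hw : w ∈ p) : w ∈ p.tail.dropLast ∨ w = a ∨ w = b := by
  obtain ⟨h1, h2, _, _⟩ := hp
  cases p with
  | nil => simp at hw
  | cons c t =>
    have hca : c = a := by simpa using h1
    subst hca
    rcases List.mem_cons.1 hw with rfl | hwt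
    · exact Or.inr (Or.inl rfl)
    by_cases htne : t = []
    · subst htne; simp at hwt
    have hbl : b = t.getLast htne := by
      rw [List.getLast?_eq_getLast (l := c :: t) (by simp)] at h2
      have h2' := Option.some_inj.1 h2
      rw [← h2', List.getLast_cons htne]
    rw [← List.dropLast_append_getLast htne] at hwt
    rcases List.mem_append.1 hwt with h | h
    · exact Or.inl (by simpa using h)
    · simp only [List.mem_singleton] at h
      exact Or.inr (Or.inr (by rw [hbl]; exact h))


lemma short_path (G : Digr V) {l : ℕ} (hl : 2 ≤ l) (hqt : ∀ u v : V,
      (∃ p : List V, G.IsPathFrom p u v ∧ p.length = l + 1) → (G.Adj u v ∨ G.Adj v u))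
    {A : Set V} (hA : ∀ x ∈ A, ∀ y ∈ A, x ≠ y → ∃ p, G.IsPathOn A p x y)
    {u v : V} (hu : u ∈ A) (hv : v ∈ A)
    (huv : u ≠ v) (h1 : ¬ G.Adj u v) (h2 : ¬ G.Adj v u) :
    ∃ p, (G.IsPathOn A p u v ∨ G.IsPathOn A p v u) ∧ p.length ≤ l + 2 := by
  classical
  have hex : ∃ k, ∃ p, G.IsPathOn A p u v ∧ p.length = k := by
    obtain ⟨p, hp⟩ := hA u hu v hv huv; exact ⟨p.length, p, hp, rfl⟩
  obtain ⟨p, hp, hplen⟩ := Nat.find_spec hex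
  have hmin : ∀ q, G.IsPathOn A q u v → p.length ≤ q.length := by
    intro q hq
    rw [hplen]
    exact Nat.find_min' hex ⟨q, hq, rfl⟩
  have hpne : p ≠ [] := by
    rintro rfl
    obtain ⟨⟨hh, _, _, _⟩, _⟩ := hp
    simp at hh
  set n : ℕ := p.length - 1 with hn
  have hlen1 : p.length = n + 1 := by
    have := List.length_pos_iff.2 hpne; omega
  set x : ℕ → V := fun i => p.getD i u with hxdef
  have hxg : ∀ i (hi : i ≤ n), x i = p[i]'(by omega) := by
    intro i hi
    exact List.getD_eq_getElem p u (by omega)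
  have hx0 : x 0 = u := by
    rw [hxg 0 (by omega)]
    obtain ⟨hh, _, _, _⟩ := hp.1
    rw [List.head?_eq_head hpne] at hh
    exact (List.getElem_zero _).trans (Option.some_inj.1 hh)
  have hxn : x n = v := by
    rw [hxg n (by omega)]
    obtain ⟨_, hh, _, _⟩ := hp.1
    rw [List.getLast?_eq_getLast hpne] at hh
    have hlast := Option.some_inj.1 hh
    rw [List.getLast_eq_getElem] at hlast
    exact hlast
  have hadj : ∀ i, i < n → G.Adj (x i) (x (i + 1)) := by
    intro i hi
    rw [hxg i (by omega), hxg (i+1) (by omega)]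
    have hc := hp.1.2.2.1
    unfold List.Chain' at hc; rw [List.isChain_iff_getElem] at hc
    have := hc i (by omega)
    simpa using this
  have hinj : ∀ i ≤ n, ∀ j ≤ n, x i = x j → i = j := by
    intro i hi j hj hij
    rw [hxg i hi, hxg j hj] at hij
    exact (hp.1.2.2.2.getElem_inj_iff).1 hij
  have hmem : ∀ i ≤ n, x i ∈ A := by
    intro i hi
    rw [hxg i hi]
    exact hp.2 _ (List.getElem_mem _)
  by_cases hnl : n ≤ l + 1
  · exact ⟨p, Or.inl hp, by omega⟩
  push_neg at hnl
  -- backward arcs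
  have hback : ∀ i, i + l ≤ n → G.Adj (x (i + l)) (x i) := by
    intro i hi
    have hpath : G.IsPathFrom ((List.range' i (l+1)).map x) (x i) (x (i + l)) := by
      have h := (G.isPathOn_map x hmem hinj (List.range' i (l+1))
        (fun a ha => by rw [List.mem_range'_1] at ha; omega)
        (List.nodup_range')
        (head?_range' (by omega))
        (by rw [getLast?_range' (by omega)])
        (G.chain'_adj_range' x i (l+1) hadj (by omega))).1
      exact h
    rcases hqt (x i) (x (i+l)) ⟨_, hpath, by simp⟩ with hfwd | hbwd
    · exfalso
      set s : List ℕ := List.range' 0 (i+1) ++ List.range' (i+l) (n - (i+l) + 1) with hs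
      have hq : G.IsPathOn A (s.map x) (x 0) (x n) := by
        apply G.isPathOn_map x hmem hinj
        · intro a ha
          rw [hs, List.mem_append, List.mem_range'_1, List.mem_range'_1] at ha
          omega
        · refine List.Nodup.append (List.nodup_range') (List.nodup_range') ?_
          intro a ha hb
          rw [List.mem_range'_1] at ha hb
          omega
        · rw [hs, List.head?_append, head?_range' (by omega)]; rfl
        · rw [hs, List.getLast?_append, getLast?_range' (by omega)]
          simp only [Option.some_or]  -- hope: (some _).or _ = some _
          congr 1
          omega
        · rw [hs]; unfold List.Chain'; rw [List.isChain_append]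
          refine ⟨G.chain'_adj_range' x 0 (i+1) hadj (by omega),
            G.chain'_adj_range' x (i+l) (n - (i+l) + 1) hadj (by omega), ?_⟩
          intro a ha b hb
          rw [getLast?_range' (by omega)] at ha
          rw [head?_range' (by omega)] at hb
          simp only [Option.mem_def, Option.some_inj] at ha hb
          subst ha; subst hb
          have e : 0 + (i + 1) - 1 = i := by omega
          rw [e]
          exact hfwd
      rw [hx0, hxn] at hq
      have := hmin _ hq
      rw [List.length_map, hs, List.length_append, List.length_range', List.length_range'] at this
      omega
    · exact hbwd
  -- descent
  have descend : ∀ j, j ≤ n - l → G.Adj v (x j) →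
      ∃ p, (G.IsPathOn A p u v ∨ G.IsPathOn A p v u) ∧ p.length ≤ l + 2 := by
    intro j
    induction j using Nat.strong_induction_on with
    | _ j IH =>
      intro hjn hvj
      rcases Nat.eq_zero_or_pos j with rfl | hj0
      · rw [hx0] at hvj; exact absurd hvj h2
      by_cases hjl : j ≤ l
      · -- final short path v, x_j, ..., x_l, u
        set s : List ℕ := n :: (List.range' j (l - j + 1) ++ [0]) with hs
        have hq : G.IsPathOn A (s.map x) (x n) (x 0) := by
          apply G.isPathOn_map x hmem hinj
          · intro a ha
            rw [hs, List.mem_cons, List.mem_append, List.mem_range'_1, List.mem_singleton] at ha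
            omega
          · rw [hs, List.nodup_cons]
            constructor
            · rw [List.mem_append, List.mem_range'_1, List.mem_singleton]
              omega
            · refine List.Nodup.append (List.nodup_range') (by simp) ?_
              intro a ha hb
              rw [List.mem_range'_1] at ha
              rw [List.mem_singleton] at hb
              omega
          · rfl
          · rw [hs]
            show ((n :: List.range' j (l - j + 1)) ++ [0]).getLast? = some 0
            rw [List.getLast?_concat]
          · rw [hs]; unfold List.Chain'; rw [List.isChain_cons]
            constructor
            · intro y hy
              rw [List.head?_append, head?_range' (by omega)] at hy
              simp only [Option.some_or, Option.mem_def, Option.some_inj] at hy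
              subst hy
              rw [hxn]
              exact hvj
            · rw [List.isChain_append]
              refine ⟨G.chain'_adj_range' x j (l - j + 1) hadj (by omega), by simp, ?_⟩
              intro a ha b hb
              rw [getLast?_range' (by omega)] at ha
              simp only [Option.mem_def, Option.some_inj, List.head?_cons] at ha hb
              subst ha; subst hb
              have e : j + (l - j + 1) - 1 = 0 + l := by omega
              rw [e]
              exact hback 0 (by omega)
        rw [hx0, hxn] at hq
        refine ⟨s.map x, Or.inr hq, ?_⟩
        rw [List.length_map, hs]
        simp
        omega
      · -- j ≥ l + 1: QT path [n, j] ++ range' (j-l) (l-1)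
        push_neg at hjl
        set s : List ℕ := n :: j :: List.range' (j - l) (l - 1) with hs
        have hspath : G.IsPathFrom (s.map x) (x n) (x (j - 2)) := by
          refine (G.isPathOn_map x hmem hinj s ?_ ?_ rfl ?_ ?_).1
          · intro a ha
            rw [hs, List.mem_cons, List.mem_cons, List.mem_range'_1] at ha
            omega
          · rw [hs, List.nodup_cons, List.nodup_cons]
            refine ⟨?_, ?_, List.nodup_range'⟩
            · rw [List.mem_cons, List.mem_range'_1]
              omega
            · rw [List.mem_range'_1]
              omega
          · rw [hs]
            show ([n, j] ++ List.range' (j - l) (l - 1)).getLast? = some (j - 2)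
            rw [List.getLast?_append, getLast?_range' (by omega)]
            show some (j - l + (l - 1) - 1) = some (j - 2)
            congr 1
            omega
          · rw [hs]; unfold List.Chain'; rw [List.isChain_cons, List.isChain_cons]
            refine ⟨?_, ?_, G.chain'_adj_range' x (j - l) (l - 1) hadj (by omega)⟩
            · intro y hy
              simp only [List.head?_cons, Option.mem_def, Option.some_inj] at hy
              subst hy
              rw [hxn]
              exact hvj
            · intro y hy
              rw [head?_range' (by omega)] at hy
              simp only [Option.mem_def, Option.some_inj] at hy
              subst hy
              have := hback (j - l) (by omega)
              rwa [show j - l + l = j by omega] at this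
        have hslen : (s.map x).length = l + 1 := by
          rw [List.length_map, hs]
          simp only [List.length_cons, List.length_range']
          omega
        rcases hqt (x n) (x (j - 2)) ⟨_, hspath, hslen⟩ with hfwd | hbwd
        · rw [hxn] at hfwd
          exact IH (j - 2) (by omega) (by omega) hfwd
        · -- shortcut x_0 ... x_{j-2}, v : contradiction
          exfalso
          set s' : List ℕ := List.range' 0 (j - 1) ++ [n] with hs'
          have hq : G.IsPathOn A (s'.map x) (x 0) (x n) := by
            apply G.isPathOn_map x hmem hinj
            · intro a ha
              rw [hs', List.mem_append, List.mem_range'_1, List.mem_singleton] at ha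
              omega
            · refine List.Nodup.append (List.nodup_range') (by simp) ?_
              intro a ha hb
              rw [List.mem_range'_1] at ha
              rw [List.mem_singleton] at hb
              omega
            · rw [hs', List.head?_append, head?_range' (by omega)]; rfl
            · rw [hs', List.getLast?_concat]
            · rw [hs']; unfold List.Chain'; rw [List.isChain_append]
              refine ⟨G.chain'_adj_range' x 0 (j - 1) hadj (by omega), by simp, ?_⟩
              intro a ha b hb
              rw [getLast?_range' (by omega)] at ha
              simp only [Option.mem_def, Option.some_inj, List.head?_cons] at ha hb
              subst ha; subst hb
              rw [show 0 + (j - 1) - 1 = j - 2 by omega]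
              exact hbwd
          rw [hx0, hxn] at hq
          have := hmin _ hq
          rw [List.length_map, hs', List.length_append, List.length_range'] at this
          simp only [List.length_singleton] at this
          omega
  have hstart := hback (n - l) (by omega)
  rw [show n - l + l = n by omega, hxn] at hstart
  exact descend (n - l) le_rfl hstart


lemma filter_length_partition {α : Type} (p : α → Bool) (L : List α) :
    (L.filter p).length + (L.filter fun a => !(p a)).length = L.length := by
  induction L with
  | nil => rfl
  | cons a t ih =>
    cases hpa : p a <;> simp [List.filter_cons, hpa] <;> omega

end Digr

/-- Let l ≥ 2, f ≥ 1, and let D be a (2f(l+2)+1)-strong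
l-quasi-transitive digraph. For any two non-adjacent vertices u, v there exist
f independent paths of length at most l+1 (hence at most l+2 vertices) all
directed from u to v, or f such paths all directed from v to u. -/
theorem l_quasi_transitive_independent_paths {V : Type} [Fintype V]
    (l f : ℕ) (hl : 2 ≤ l) (hf : 1 ≤ f)
    (G : Digr V) (hqt : G.LQuasiTransitive l)
    (hstrong : G.KStrong (2 * f * (l + 2) + 1))
    (u v : V) (huv : u ≠ v) (hnadj : ¬ G.Adj u v ∧ ¬ G.Adj v u) :
    (∃ P : Fin f → List V,
      (∀ i, G.IsPathFrom (P i) u v ∧ (P i).length ≤ l + 2) ∧ Digr.IndepPaths P) ∨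
    (∃ P : Fin f → List V,
      (∀ i, G.IsPathFrom (P i) v u ∧ (P i).length ≤ l + 2) ∧ Digr.IndepPaths P) := by
  classical
  obtain ⟨hnuv, hnvu⟩ := hnadj
  set Good : List V × Bool → Prop := fun q =>
    ((q.2 = true → G.IsPathFrom q.1 u v) ∧ (q.2 = false → G.IsPathFrom q.1 v u)) ∧
      q.1.length ≤ l + 2 with hGood
  set R : List V × Bool → List V × Bool → Prop := fun a b =>
    (∀ w ∈ a.1.tail.dropLast, w ∉ b.1) ∧ (∀ w ∈ b.1.tail.dropLast, w ∉ a.1) with hRdef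
  have ends : ∀ q : List V × Bool, Good q →
      ∃ a b, ((a = u ∧ b = v) ∨ (a = v ∧ b = u)) ∧ G.IsPathFrom q.1 a b := by
    intro q hq
    cases hb : q.2
    · exact ⟨v, u, Or.inr ⟨rfl, rfl⟩, hq.1.2 hb⟩
    · exact ⟨u, v, Or.inl ⟨rfl, rfl⟩, hq.1.1 hb⟩
  have build : ∀ m, m ≤ 2 * f - 1 → ∃ L : List (List V × Bool),
      L.length = m ∧ (∀ q ∈ L, Good q) ∧ L.Pairwise R := by
    intro m
    induction m with
    | zero => exact fun _ => ⟨[], rfl, by simp, List.Pairwise.nil⟩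
    | succ m IH =>
      intro hm
      obtain ⟨L, hLlen, hLgood, hLpw⟩ := IH (by omega)
      set S : Finset V := (L.flatMap fun q => q.1.tail.dropLast).toFinset with hS
      have hmemS : ∀ w : V, w ∈ S ↔ ∃ q ∈ L, w ∈ q.1.tail.dropLast := by
        intro w; rw [hS, List.mem_toFinset, List.mem_flatMap]
      have hScard : S.card ≤ 2 * f * (l + 2) := by
        have h1 : S.card ≤ (L.flatMap fun q => q.1.tail.dropLast).length :=
          List.toFinset_card_le _
        rw [List.length_flatMap] at h1
        change _ ≤ (List.map (List.length ∘ fun q : List V × Bool => q.1.tail.dropLast) L).sum at h1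
        have h2 : (List.map (List.length ∘ fun q : List V × Bool => q.1.tail.dropLast) L).sum ≤
            (List.map (List.length ∘ fun q : List V × Bool => q.1.tail.dropLast) L).length • l := by
          apply List.sum_le_card_nsmul
          intro y hy
          obtain ⟨q, hq, rfl⟩ := List.mem_map.1 hy
          have hq2 := (hLgood q hq).2
          simp only [Function.comp_apply]
          have hlen : q.1.tail.dropLast.length = q.1.length - 1 - 1 := by
            rw [List.length_dropLast, List.length_tail]
          omega
        rw [List.length_map, hLlen, smul_eq_mul] at h2
        have h3 : m * l ≤ 2 * f * (l + 2) :=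
          calc m * l ≤ (2 * f) * l := Nat.mul_le_mul_right _ (by omega)
            _ ≤ 2 * f * (l + 2) := Nat.mul_le_mul_left _ (by omega)
        omega
      have hSstrong := hstrong.2 S (by omega)
      have hends_ne : ∀ w : V, w ∈ S → w ≠ u ∧ w ≠ v := by
        intro w hw
        obtain ⟨q, hq, hwq⟩ := (hmemS w).1 hw
        obtain ⟨a, b, hab, hpath⟩ := ends q (hLgood q hq)
        have hint := G.interior_ne hpath hwq
        rcases hab with ⟨rfl, rfl⟩ | ⟨rfl, rfl⟩
        · exact ⟨hint.1, hint.2.1⟩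
        · exact ⟨hint.2.1, hint.1⟩
      have huS : u ∈ ((↑S : Set V)ᶜ) := by
        intro hcon
        exact (hends_ne u (Finset.mem_coe.1 hcon)).1 rfl
      have hvS : v ∈ ((↑S : Set V)ᶜ) := by
        intro hcon
        exact (hends_ne v (Finset.mem_coe.1 hcon)).2 rfl
      obtain ⟨q, hq, hqlen⟩ := G.short_path hl hqt hSstrong huS hvS huv hnuv hnvu
      have step : ∀ bb : Bool, Good (q, bb) → (∀ w ∈ q, w ∉ S) →
          ∃ L' : List (List V × Bool), L'.length = m + 1 ∧ (∀ r ∈ L', Good r) ∧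
            L'.Pairwise R := by
        intro bb hGoodq hav
        refine ⟨L ++ [(q, bb)], by simp [hLlen], ?_, ?_⟩
        · intro r hr
          rcases List.mem_append.1 hr with h | h
          · exact hLgood r h
          · rw [List.mem_singleton] at h; subst h; exact hGoodq
        · rw [List.pairwise_append]
          refine ⟨hLpw, by simp, ?_⟩
          intro a ha b hb
          rw [List.mem_singleton] at hb
          subst hb
          obtain ⟨aa, ab, haab, hapath⟩ := ends a (hLgood a ha)
          obtain ⟨qa, qb, hqab, hqpath⟩ := ends (q, bb) hGoodq
          constructor
          · intro w hw hwq
            exact hav w hwq ((hmemS w).2 ⟨a, ha, hw⟩)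
          · intro w hw hwa
            have hint := G.interior_ne hqpath hw
            have hwq : w ∈ q := hint.2.2
            have hwu : w ≠ u ∧ w ≠ v := by
              rcases hqab with ⟨rfl, rfl⟩ | ⟨rfl, rfl⟩
              · exact ⟨hint.1, hint.2.1⟩
              · exact ⟨hint.2.1, hint.1⟩
            rcases G.mem_path_cases hapath hwa with h | h | h
            · exact hav w hwq ((hmemS w).2 ⟨a, ha, h⟩)
            · rcases haab with ⟨rfl, rfl⟩ | ⟨rfl, rfl⟩
              · exact hwu.1 h
              · exact hwu.2 h
            · rcases haab with ⟨rfl, rfl⟩ | ⟨rfl, rfl⟩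
              · exact hwu.2 h
              · exact hwu.1 h
      have havoid : ∀ (hh : G.IsPathOn ((↑S : Set V)ᶜ) q u v ∨ G.IsPathOn ((↑S : Set V)ᶜ) q v u),
          ∀ w ∈ q, w ∉ S := by
        rintro (hh | hh) w hw hwS
        · exact hh.2 w hw (Finset.mem_coe.2 hwS)
        · exact hh.2 w hw (Finset.mem_coe.2 hwS)
      rcases hq with hq' | hq'
      · exact step true ⟨⟨fun _ => hq'.1, fun hb => by simp at hb⟩, hqlen⟩
          (havoid (Or.inl hq'))
      · exact step false ⟨⟨fun hb => by simp at hb, fun _ => hq'.1⟩, hqlen⟩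
          (havoid (Or.inr hq'))
  obtain ⟨L, hLlen, hLgood, hLpw⟩ := build (2 * f - 1) le_rfl
  have hpart := Digr.filter_length_partition (fun q : List V × Bool => q.2) L
  rw [hLlen] at hpart
  have hcase : f ≤ (L.filter (fun q : List V × Bool => q.2)).length ∨
      f ≤ (L.filter (fun q : List V × Bool => !q.2)).length := by omega
  have extract : ∀ (L₁ : List (List V × Bool)) (hc : f ≤ L₁.length)
      (hsub : ∀ r ∈ L₁, r ∈ L) (hpw : L₁.Pairwise R) (z w : V)
      (hdir : ∀ r ∈ L₁, G.IsPathFrom r.1 z w),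
      ∃ P : Fin f → List V,
        (∀ i, G.IsPathFrom (P i) z w ∧ (P i).length ≤ l + 2) ∧ Digr.IndepPaths P := by
    intro L₁ hc hsub hpw z w hdir
    refine ⟨fun i => (L₁[(i : ℕ)]'(lt_of_lt_of_le i.2 hc)).1, ?_, ?_⟩
    · intro i
      have hmem : L₁[(i : ℕ)]'(lt_of_lt_of_le i.2 hc) ∈ L₁ := List.getElem_mem _
      exact ⟨hdir _ hmem, (hLgood _ (hsub _ hmem)).2⟩
    · intro i j hij w' hw'
      rw [List.pairwise_iff_getElem] at hpw
      rcases lt_or_gt_of_ne (fun h : (i : ℕ) = (j : ℕ) => hij (Fin.ext h)) with h | h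
      · exact (hpw i j _ _ h).1 w' hw'
      · exact (hpw j i _ _ h).2 w' hw'
  rcases hcase with hc | hc
  · left
    refine extract _ hc (fun r hr => List.mem_of_mem_filter hr) (hLpw.filter _) u v ?_
    intro r hr
    have hbt : r.2 = true := by simpa using List.of_mem_filter hr
    exact (hLgood r (List.mem_of_mem_filter hr)).1.1 hbt
  · right
    refine extract _ hc (fun r hr => List.mem_of_mem_filter hr) (hLpw.filter _) v u ?_
    intro r hr
    have hbt : r.2 = false := by simpa using List.of_mem_filter hr
    exact (hLgood r (List.mem_of_mem_filter hr)).1.2 hbt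
end
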